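/- arXiv:2009.08853 — 6 statements merged into one kernel-verified Lean document; each statement's English description precedes it below -/
import Mathlib

section
/- Let n ≥ 2 and let P₁ and P₂ be real polynomials of degree n, having n distinct real roots t_{1,1} < t_{1,2} < ⋯ < t_{1,n} and t_{2,1} < t_{2,2} < ⋯ < t_{2,n}, respectively. Assume the roots interlace in the sense t_{1,1} ≤ t_{2,1} < t_{1,2} ≤ t_{2,2} < ⋯ < t_{1,n} ≤ t_{2,n}, where at least one of the inequalities t_{1,i} ≤ t_{2,i} is strict. Then, listing the real roots v_{1,1} ≤ ⋯ ≤ v_{1,n−1} of P₁′ and v_{2,1} ≤ ⋯ ≤ v_{2,n−1} of P₂′, these roots strictly interlace: v_{1,1} < v_{2,1} < v_{1,2} < v_{2,2} < ⋯ < v_{1,n−1} < v_{2,n−1}. -/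
open Finset Polynomial

lemma inv_lt_inv_same_sign {a b : ℝ} (hab : a < b) (h : 0 < a ∨ b < 0) : b⁻¹ < a⁻¹ := by
  have ha : a ≠ 0 := by rcases h with h | h <;> [exact ne_of_gt h; exact ne_of_lt (hab.trans h)]
  have hb : b ≠ 0 := by rcases h with h | h <;> [exact ne_of_gt (h.trans hab); exact ne_of_lt h]
  have hpos : 0 < a * b := by
    rcases h with h | h
    · exact mul_pos h (h.trans hab)
    · exact mul_pos_of_neg_of_neg (hab.trans h) h
  have key : a⁻¹ - b⁻¹ = (b - a) * (a * b)⁻¹ := by field_simp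
  have : 0 < a⁻¹ - b⁻¹ := by rw [key]; exact mul_pos (sub_pos.2 hab) (inv_pos.2 hpos)
  linarith

lemma inv_le_inv_same_sign {a b : ℝ} (hab : a ≤ b) (h : 0 < a ∨ b < 0) : b⁻¹ ≤ a⁻¹ := by
  rcases eq_or_lt_of_le hab with rfl | h'
  · exact le_rfl
  · exact le_of_lt (inv_lt_inv_same_sign h' h)

lemma deriv_prod_XsubC (s : Finset ℕ) (t : ℕ → ℝ) :
    derivative (∏ i ∈ s, (X - C (t i))) = ∑ j ∈ s, ∏ i ∈ s.erase j, (X - C (t i)) := by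
  classical
  induction s using Finset.induction_on with
  | empty => simp
  | insert a s ha ih =>
    rw [Finset.prod_insert ha, derivative_mul, ih, Finset.sum_insert ha, Finset.erase_insert ha]
    simp only [derivative_sub, derivative_X, derivative_C, sub_zero, one_mul]
    congr 1
    rw [Finset.mul_sum]
    refine Finset.sum_congr rfl fun j hj => ?_
    rw [Finset.erase_insert_of_ne (by rintro rfl; exact ha hj),
      Finset.prod_insert (fun h => ha (Finset.mem_of_mem_erase h))]

lemma roots_eq_of (P : Polynomial ℝ) (hP : P ≠ 0) (s : Finset ℕ) (u : ℕ → ℝ)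
    (hinj : ∀ i ∈ s, ∀ j ∈ s, u i = u j → i = j)
    (hru : ∀ i ∈ s, P.eval (u i) = 0) (hcard : P.natDegree ≤ s.card) :
    P.roots = s.val.map u := by
  classical
  have hnodup : (s.val.map u).Nodup := Multiset.Nodup.map_on hinj s.nodup
  have hle : s.val.map u ≤ P.roots := by
    rw [Multiset.le_iff_count]
    intro a
    by_cases ha : a ∈ s.val.map u
    · have h1 : (s.val.map u).count a = 1 := Multiset.count_eq_one_of_mem hnodup ha
      rw [h1, count_roots]
      obtain ⟨i, his, rfl⟩ := Multiset.mem_map.1 ha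
      exact (rootMultiplicity_pos hP).2 (hru i his)
    · simp [Multiset.count_eq_zero_of_notMem ha]
  refine (Multiset.eq_of_le_of_card_le hle ?_).symm
  rw [Multiset.card_map]
  exact (P.card_roots').trans hcard

lemma struct_lemma (n : ℕ) (hn : 2 ≤ n) (P : Polynomial ℝ) (t : ℕ → ℝ)
    (hdeg : P.natDegree = n)
    (ht : ∀ i j, 1 ≤ i → i < j → j ≤ n → t i < t j)
    (hroot : ∀ x : ℝ, P.eval x = 0 ↔ ∃ i ∈ Finset.Icc 1 n, x = t i) :
    ∃ c : ℝ, c ≠ 0 ∧ P = C c * ∏ i ∈ Finset.Icc 1 n, (X - C (t i)) := by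
  have hP0 : P ≠ 0 := fun h => by rw [h, natDegree_zero] at hdeg; omega
  have hinj : ∀ i ∈ Finset.Icc 1 n, ∀ j ∈ Finset.Icc 1 n, t i = t j → i = j := by
    intro i hi j hj hij
    simp only [Finset.mem_Icc] at hi hj
    by_contra hne
    rcases Nat.lt_or_ge i j with h | h
    · exact absurd hij (ne_of_lt (ht i j hi.1 h hj.2))
    · exact absurd hij.symm (ne_of_lt (ht j i hj.1 (by omega) hi.2))
  have hru : ∀ i ∈ Finset.Icc 1 n, P.eval (t i) = 0 := fun i hi =>
    (hroot (t i)).2 ⟨i, hi, rfl⟩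
  have hcard : (Finset.Icc 1 n).card = n := by rw [Nat.card_Icc]; omega
  have hroots : P.roots = (Finset.Icc 1 n).val.map t :=
    roots_eq_of P hP0 _ t hinj hru (by rw [hcard, hdeg])
  refine ⟨P.leadingCoeff, leadingCoeff_ne_zero.2 hP0, ?_⟩
  have hcr : Multiset.card P.roots = P.natDegree := by
    rw [hroots, Multiset.card_map, hdeg]; exact hcard
  conv_lhs => rw [← C_leadingCoeff_mul_prod_multiset_X_sub_C hcr]
  rw [hroots, Multiset.map_map]
  rfl

lemma key_iff (n : ℕ) (c : ℝ) (hc : c ≠ 0) (t : ℕ → ℝ) (x : ℝ)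
    (hx : ∀ i ∈ Finset.Icc 1 n, x ≠ t i) :
    ((derivative (C c * ∏ i ∈ Finset.Icc 1 n, (X - C (t i)))).eval x = 0 ↔
      ∑ j ∈ Finset.Icc 1 n, (x - t j)⁻¹ = 0) := by
  have hne : ∀ i ∈ Finset.Icc 1 n, x - t i ≠ 0 := fun i hi => sub_ne_zero.2 (hx i hi)
  have hprod : ∏ i ∈ Finset.Icc 1 n, (x - t i) ≠ 0 := Finset.prod_ne_zero_iff.2 hne
  have heval : (derivative (C c * ∏ i ∈ Finset.Icc 1 n, (X - C (t i)))).eval x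
      = c * ∑ j ∈ Finset.Icc 1 n, ∏ i ∈ (Finset.Icc 1 n).erase j, (x - t i) := by
    rw [derivative_C_mul, deriv_prod_XsubC]
    simp [eval_finset_sum, eval_prod]
  have hterm : ∀ j ∈ Finset.Icc 1 n, ∏ i ∈ (Finset.Icc 1 n).erase j, (x - t i)
      = (∏ i ∈ Finset.Icc 1 n, (x - t i)) * (x - t j)⁻¹ := by
    intro j hj
    rw [← Finset.mul_prod_erase _ _ hj, mul_comm (x - t j), mul_assoc,
      mul_inv_cancel₀ (hne j hj), mul_one]
  rw [heval, Finset.sum_congr rfl hterm, ← Finset.mul_sum]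
  constructor
  · intro h
    rcases mul_eq_zero.1 h with h | h
    · exact absurd h hc
    · rcases mul_eq_zero.1 h with h | h
      · exact absurd h hprod
      · exact h
  · intro h; rw [h, mul_zero, mul_zero]

lemma rolle_root (P : Polynomial ℝ) (a b : ℝ) (hab : a < b) (ha : P.eval a = 0)
    (hb : P.eval b = 0) : ∃ w ∈ Set.Ioo a b, (derivative P).eval w = 0 := by
  obtain ⟨w, hw, hw0⟩ := exists_deriv_eq_zero hab (P.continuous_aeval.continuousOn) (ha.trans hb.symm)
  exact ⟨w, hw, by rw [← Polynomial.deriv]; exact hw0⟩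

/-- mono (≤) version of root ordering -/
lemma t_mono_le (n : ℕ) (t : ℕ → ℝ) (ht : ∀ i j, 1 ≤ i → i < j → j ≤ n → t i < t j) :
    ∀ i j, 1 ≤ i → i ≤ j → j ≤ n → t i ≤ t j := by
  intro i j h1 h2 h3
  rcases eq_or_lt_of_le h2 with rfl | h
  · exact le_rfl
  · exact le_of_lt (ht i j h1 h h3)

lemma deriv_roots (n : ℕ) (hn : 2 ≤ n) (P : Polynomial ℝ) (t : ℕ → ℝ)
    (hdeg : P.natDegree = n)
    (ht : ∀ i j, 1 ≤ i → i < j → j ≤ n → t i < t j)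
    (hroot : ∀ x : ℝ, P.eval x = 0 ↔ ∃ i ∈ Finset.Icc 1 n, x = t i) :
    ∃ v : ℕ → ℝ,
      (∀ k, 1 ≤ k → k ≤ n - 1 → v k ∈ Set.Ioo (t k) (t (k + 1))) ∧
      (∀ x : ℝ, (derivative P).eval x = 0 ↔ ∃ k ∈ Finset.Icc 1 (n - 1), x = v k) := by
  classical
  have hex : ∀ k, 1 ≤ k → k ≤ n - 1 →
      ∃ w ∈ Set.Ioo (t k) (t (k + 1)), (derivative P).eval w = 0 := by
    intro k h1 h2
    exact rolle_root P (t k) (t (k + 1)) (ht k (k + 1) h1 (Nat.lt_succ_self k) (by omega))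
      ((hroot _).2 ⟨k, Finset.mem_Icc.2 ⟨h1, by omega⟩, rfl⟩)
      ((hroot _).2 ⟨k + 1, Finset.mem_Icc.2 ⟨by omega, by omega⟩, rfl⟩)
  set v : ℕ → ℝ := fun k =>
    if h : 1 ≤ k ∧ k ≤ n - 1 then (hex k h.1 h.2).choose else 0 with hv_def
  have hv : ∀ k, 1 ≤ k → k ≤ n - 1 →
      v k ∈ Set.Ioo (t k) (t (k + 1)) ∧ (derivative P).eval (v k) = 0 := by
    intro k h1 h2
    have : v k = (hex k h1 h2).choose := by rw [hv_def]; simp [h1, h2]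
    rw [this]
    exact ⟨(hex k h1 h2).choose_spec.1, (hex k h1 h2).choose_spec.2⟩
  refine ⟨v, fun k h1 h2 => (hv k h1 h2).1, ?_⟩
  -- derivative ≠ 0
  have hD0 : derivative P ≠ 0 := by
    intro h
    have := natDegree_eq_zero_of_derivative_eq_zero h
    omega
  have hvmono : ∀ i ∈ Finset.Icc 1 (n - 1), ∀ j ∈ Finset.Icc 1 (n - 1), i < j → v i < v j := by
    intro i hi j hj hij
    simp only [Finset.mem_Icc] at hi hj
    have h1 := (hv i hi.1 hi.2).1
    have h2 := (hv j hj.1 hj.2).1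
    calc v i < t (i + 1) := h1.2
      _ ≤ t j := t_mono_le n t ht (i + 1) j (by omega) (by omega) (by omega)
      _ < v j := h2.1
  have hinj : ∀ i ∈ Finset.Icc 1 (n - 1), ∀ j ∈ Finset.Icc 1 (n - 1), v i = v j → i = j := by
    intro i hi j hj hij
    by_contra hne
    rcases Nat.lt_or_ge i j with h | h
    · exact absurd hij (ne_of_lt (hvmono i hi j hj h))
    · exact absurd hij.symm (ne_of_lt (hvmono j hj i hi (by omega)))
  have hru : ∀ k ∈ Finset.Icc 1 (n - 1), (derivative P).eval (v k) = 0 := by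
    intro k hk
    simp only [Finset.mem_Icc] at hk
    exact (hv k hk.1 hk.2).2
  have hcard : (Finset.Icc 1 (n - 1)).card = n - 1 := by rw [Nat.card_Icc]; omega
  have hdegD : (derivative P).natDegree ≤ n - 1 := by
    have := natDegree_derivative_le P
    omega
  have hroots : (derivative P).roots = (Finset.Icc 1 (n - 1)).val.map v :=
    roots_eq_of _ hD0 _ v hinj hru (by rw [hcard]; exact hdegD)
  intro x
  constructor
  · intro hx
    have hxr : x ∈ (derivative P).roots := by
      rw [mem_roots hD0]
      exact hx
    rw [hroots] at hxr
    obtain ⟨k, hk, rfl⟩ := Multiset.mem_map.1 hxr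
    exact ⟨k, hk, rfl⟩
  · rintro ⟨k, hk, rfl⟩
    exact hru k hk

/-- the sum `∑ 1/(x - tᵢ)` is strictly decreasing between consecutive roots -/
lemma sum_inv_strict_anti (n k : ℕ) (t : ℕ → ℝ)
    (ht : ∀ i j, 1 ≤ i → i < j → j ≤ n → t i < t j)
    (hn : 1 ≤ n) (hk1 : 1 ≤ k) (hk2 : k ≤ n - 1) {x y : ℝ}
    (hx : t k < x) (hxy : x < y) (hy : y < t (k + 1)) :
    ∑ i ∈ Finset.Icc 1 n, (y - t i)⁻¹ < ∑ i ∈ Finset.Icc 1 n, (x - t i)⁻¹ := by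
  apply Finset.sum_lt_sum_of_nonempty ⟨1, Finset.mem_Icc.2 ⟨le_rfl, hn⟩⟩
  intro i hi
  simp only [Finset.mem_Icc] at hi
  rcases Nat.lt_or_ge i (k + 1) with h | h
  · -- i ≤ k : both positive
    have hti : t i ≤ t k := t_mono_le n t ht i k hi.1 (by omega) (by omega)
    exact inv_lt_inv_same_sign (by linarith) (Or.inl (by linarith))
  · -- i ≥ k + 1 : both negative
    have hti : t (k + 1) ≤ t i := t_mono_le n t ht (k + 1) i (by omega) h hi.2
    exact inv_lt_inv_same_sign (by linarith) (Or.inr (by linarith))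

/-- same-index comparison : for `x ∈ (t₂ k, t₁ (k+1))`, `f₁ x < f₂ x`. -/
lemma cmp_same (n k : ℕ) (t₁ t₂ : ℕ → ℝ)
    (ht₁ : ∀ i j, 1 ≤ i → i < j → j ≤ n → t₁ i < t₁ j)
    (ht₂ : ∀ i j, 1 ≤ i → i < j → j ≤ n → t₂ i < t₂ j)
    (hle : ∀ i ∈ Finset.Icc 1 n, t₁ i ≤ t₂ i)
    (hstrict : ∃ i ∈ Finset.Icc 1 n, t₁ i < t₂ i)
    (hk1 : 1 ≤ k) (hk2 : k ≤ n - 1) {x : ℝ}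
    (hx1 : t₂ k < x) (hx2 : x < t₁ (k + 1)) :
    ∑ i ∈ Finset.Icc 1 n, (x - t₁ i)⁻¹ < ∑ i ∈ Finset.Icc 1 n, (x - t₂ i)⁻¹ := by
  have sign : ∀ i ∈ Finset.Icc 1 n, 0 < x - t₂ i ∨ x - t₁ i < 0 := by
    intro i hi
    simp only [Finset.mem_Icc] at hi
    rcases Nat.lt_or_ge i (k + 1) with h | h
    · have : t₂ i ≤ t₂ k := t_mono_le n t₂ ht₂ i k hi.1 (by omega) (by omega)
      exact Or.inl (by linarith)
    · have : t₁ (k + 1) ≤ t₁ i := t_mono_le n t₁ ht₁ (k + 1) i (by omega) h hi.2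
      exact Or.inr (by linarith)
  apply Finset.sum_lt_sum
  · intro i hi
    exact inv_le_inv_same_sign (by have := hle i hi; linarith) (sign i hi)
  · obtain ⟨i₀, hi₀, hst⟩ := hstrict
    exact ⟨i₀, hi₀, inv_lt_inv_same_sign (by linarith) (sign i₀ hi₀)⟩

/-- shifted comparison : for `x ∈ (t₁ (k+1), t₁ (k+2))` with `x < t₂ (k+1)`,
`f₂ x < f₁ x`. -/
lemma cmp_shift (n k : ℕ) (t₁ t₂ : ℕ → ℝ) (hn : 2 ≤ n)
    (ht₁ : ∀ i j, 1 ≤ i → i < j → j ≤ n → t₁ i < t₁ j)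
    (ht₂ : ∀ i j, 1 ≤ i → i < j → j ≤ n → t₂ i < t₂ j)
    (hlt : ∀ i, 1 ≤ i → i ≤ n - 1 → t₂ i < t₁ (i + 1))
    (hk1 : 1 ≤ k) (hk2 : k ≤ n - 2) {x : ℝ}
    (hx1 : t₁ (k + 1) < x) (hx2 : x < t₁ (k + 2)) (hx3 : x < t₂ (k + 1)) :
    ∑ i ∈ Finset.Icc 1 n, (x - t₂ i)⁻¹ < ∑ i ∈ Finset.Icc 1 n, (x - t₁ i)⁻¹ := by
  -- split top of LHS, bottom of RHS
  have hsplit₂ : ∑ i ∈ Finset.Icc 1 n, (x - t₂ i)⁻¹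
      = (∑ i ∈ Finset.Icc 1 (n - 1), (x - t₂ i)⁻¹) + (x - t₂ n)⁻¹ := by
    have : n = (n - 1) + 1 := by omega
    rw [this, Finset.sum_Icc_succ_top (by omega)]
    congr 2 <;> omega
  have hins : Finset.Icc 1 n = insert 1 (Finset.Icc 2 n) := by
    ext i; simp only [Finset.mem_Icc, Finset.mem_insert]; omega
  have hsplit₁ : ∑ i ∈ Finset.Icc 1 n, (x - t₁ i)⁻¹
      = (x - t₁ 1)⁻¹ + ∑ i ∈ Finset.Icc 2 n, (x - t₁ i)⁻¹ := by
    rw [hins, Finset.sum_insert (by simp)]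
  have hreindex : ∑ i ∈ Finset.Icc 2 n, (x - t₁ i)⁻¹
      = ∑ i ∈ Finset.Icc 1 (n - 1), (x - t₁ (i + 1))⁻¹ := by
    refine (Finset.sum_bij' (fun i _ => i + 1) (fun j _ => j - 1) ?_ ?_ ?_ ?_ ?_).symm
    · intro i hi; simp only [Finset.mem_Icc] at hi ⊢; omega
    · intro j hj; simp only [Finset.mem_Icc] at hj ⊢; omega
    · intro i hi; simp only [Finset.mem_Icc] at hi; show i + 1 - 1 = i; omega
    · intro j hj; simp only [Finset.mem_Icc] at hj; show j - 1 + 1 = j; omega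
    · intro i _; rfl
  have hterm : ∑ i ∈ Finset.Icc 1 (n - 1), (x - t₂ i)⁻¹
      ≤ ∑ i ∈ Finset.Icc 1 (n - 1), (x - t₁ (i + 1))⁻¹ := by
    apply Finset.sum_le_sum
    intro i hi
    simp only [Finset.mem_Icc] at hi
    have hba : x - t₁ (i + 1) < x - t₂ i := by
      have := hlt i hi.1 hi.2; linarith
    apply inv_le_inv_same_sign (le_of_lt hba)
    rcases Nat.lt_or_ge i (k + 1) with h | h
    · -- i ≤ k : 0 < x - t₁ (i+1)
      have : t₁ (i + 1) ≤ t₁ (k + 1) :=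
        t_mono_le n t₁ ht₁ (i + 1) (k + 1) (by omega) (by omega) (by omega)
      exact Or.inl (by linarith)
    · -- i ≥ k+1 : x - t₂ i < 0
      have : t₂ (k + 1) ≤ t₂ i := t_mono_le n t₂ ht₂ (k + 1) i (by omega) h (by omega)
      exact Or.inr (by linarith)
  have hneg : (x - t₂ n)⁻¹ < 0 := by
    apply inv_lt_zero.2
    have : t₂ (k + 1) ≤ t₂ n := t_mono_le n t₂ ht₂ (k + 1) n (by omega) (by omega) le_rfl
    linarith
  have hpos : 0 < (x - t₁ 1)⁻¹ := by
    apply inv_pos.2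
    have : t₁ 1 ≤ t₁ (k + 1) := t_mono_le n t₁ ht₁ 1 (k + 1) le_rfl (by omega) (by omega)
    linarith
  rw [hsplit₂, hsplit₁, hreindex]
  linarith

/-- points strictly between consecutive roots avoid all roots -/
lemma ne_roots (n k : ℕ) (t : ℕ → ℝ)
    (ht : ∀ i j, 1 ≤ i → i < j → j ≤ n → t i < t j)
    (hk1 : 1 ≤ k) (hk2 : k + 1 ≤ n) {x : ℝ}
    (hx1 : t k < x) (hx2 : x < t (k + 1)) :
    ∀ i ∈ Finset.Icc 1 n, x ≠ t i := by
  intro i hi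
  simp only [Finset.mem_Icc] at hi
  rcases Nat.lt_or_ge i (k + 1) with h | h
  · have : t i ≤ t k := t_mono_le n t ht i k hi.1 (by omega) (by omega)
    linarith
  · have : t (k + 1) ≤ t i := t_mono_le n t ht (k + 1) i (by omega) h hi.2
    linarith

/-- **Lemma (Sahm / Dette–Melas–Shpilev).** If two real polynomials of degree `n ≥ 2` have
`n` distinct real roots each, which interlace (with at least one strict inequality
`t₁ᵢ < t₂ᵢ`), then the `n − 1` real roots of their derivatives strictly interlace. -/
theorem stmt_0 (n : ℕ) (hn : 2 ≤ n) (P₁ P₂ : Polynomial ℝ) (t₁ t₂ : ℕ → ℝ)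
    (hdeg₁ : P₁.natDegree = n) (hdeg₂ : P₂.natDegree = n)
    (ht₁ : ∀ i j, 1 ≤ i → i < j → j ≤ n → t₁ i < t₁ j)
    (ht₂ : ∀ i j, 1 ≤ i → i < j → j ≤ n → t₂ i < t₂ j)
    (hroot₁ : ∀ x : ℝ, P₁.eval x = 0 ↔ ∃ i ∈ Finset.Icc 1 n, x = t₁ i)
    (hroot₂ : ∀ x : ℝ, P₂.eval x = 0 ↔ ∃ i ∈ Finset.Icc 1 n, x = t₂ i)
    (hle : ∀ i ∈ Finset.Icc 1 n, t₁ i ≤ t₂ i)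
    (hlt : ∀ i, 1 ≤ i → i ≤ n - 1 → t₂ i < t₁ (i + 1))
    (hstrict : ∃ i ∈ Finset.Icc 1 n, t₁ i < t₂ i) :
    ∃ v₁ v₂ : ℕ → ℝ,
      (∀ k l, 1 ≤ k → k ≤ l → l ≤ n - 1 → v₁ k ≤ v₁ l) ∧
      (∀ k l, 1 ≤ k → k ≤ l → l ≤ n - 1 → v₂ k ≤ v₂ l) ∧
      (∀ x : ℝ, (Polynomial.derivative P₁).eval x = 0 ↔
        ∃ k ∈ Finset.Icc 1 (n - 1), x = v₁ k) ∧
      (∀ x : ℝ, (Polynomial.derivative P₂).eval x = 0 ↔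
        ∃ k ∈ Finset.Icc 1 (n - 1), x = v₂ k) ∧
      (∀ k ∈ Finset.Icc 1 (n - 1), v₁ k < v₂ k) ∧
      (∀ k, 1 ≤ k → k ≤ n - 2 → v₂ k < v₁ (k + 1)) := by
  obtain ⟨c₁, hc₁, hP₁⟩ := struct_lemma n hn P₁ t₁ hdeg₁ ht₁ hroot₁
  obtain ⟨c₂, hc₂, hP₂⟩ := struct_lemma n hn P₂ t₂ hdeg₂ ht₂ hroot₂
  obtain ⟨v₁, hv₁, hiff₁⟩ := deriv_roots n hn P₁ t₁ hdeg₁ ht₁ hroot₁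
  obtain ⟨v₂, hv₂, hiff₂⟩ := deriv_roots n hn P₂ t₂ hdeg₂ ht₂ hroot₂
  -- log-derivative characterization at non-roots
  have hsum₁ : ∀ x : ℝ, (∀ i ∈ Finset.Icc 1 n, x ≠ t₁ i) →
      ((derivative P₁).eval x = 0 ↔ ∑ j ∈ Finset.Icc 1 n, (x - t₁ j)⁻¹ = 0) := by
    intro x hx; rw [hP₁]; exact key_iff n c₁ hc₁ t₁ x hx
  have hsum₂ : ∀ x : ℝ, (∀ i ∈ Finset.Icc 1 n, x ≠ t₂ i) →
      ((derivative P₂).eval x = 0 ↔ ∑ j ∈ Finset.Icc 1 n, (x - t₂ j)⁻¹ = 0) := by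
    intro x hx; rw [hP₂]; exact key_iff n c₂ hc₂ t₂ x hx
  -- monotonicity of v's
  have hmono : ∀ (t : ℕ → ℝ) (v : ℕ → ℝ),
      (∀ i j, 1 ≤ i → i < j → j ≤ n → t i < t j) →
      (∀ k, 1 ≤ k → k ≤ n - 1 → v k ∈ Set.Ioo (t k) (t (k + 1))) →
      ∀ k l, 1 ≤ k → k ≤ l → l ≤ n - 1 → v k ≤ v l := by
    intro t v ht hv k l h1 h2 h3
    rcases eq_or_lt_of_le h2 with rfl | h
    · exact le_rfl
    · have hk := hv k h1 (by omega)
      have hl := hv l (by omega) h3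
      have : t (k + 1) ≤ t l := t_mono_le n t ht (k + 1) l (by omega) (by omega) (by omega)
      have := hk.2
      have := hl.1
      linarith [hk.2, hl.1]
  refine ⟨v₁, v₂, hmono t₁ v₁ ht₁ hv₁, hmono t₂ v₂ ht₂ hv₂, hiff₁, hiff₂, ?_, ?_⟩
  · -- v₁ k < v₂ k
    intro k hk
    simp only [Finset.mem_Icc] at hk
    obtain ⟨hk1, hk2⟩ := hk
    have hw₁ := hv₁ k hk1 hk2
    have hw₂ := hv₂ k hk1 hk2
    by_cases hc : v₁ k ≤ t₂ k
    · linarith [hw₂.1]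
    push_neg at hc
    -- t₂ k < v₁ k < t₁ (k+1)
    have hne₁ : ∀ i ∈ Finset.Icc 1 n, v₁ k ≠ t₁ i :=
      ne_roots n k t₁ ht₁ hk1 (by omega) hw₁.1 hw₁.2
    have hzero₁ : ∑ j ∈ Finset.Icc 1 n, (v₁ k - t₁ j)⁻¹ = 0 := by
      rw [← hsum₁ (v₁ k) hne₁]
      exact ((hiff₁ (v₁ k)).2 ⟨k, Finset.mem_Icc.2 ⟨hk1, hk2⟩, rfl⟩)
    have hpos : 0 < ∑ j ∈ Finset.Icc 1 n, (v₁ k - t₂ j)⁻¹ := by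
      have := cmp_same n k t₁ t₂ ht₁ ht₂ hle hstrict hk1 hk2 hc hw₁.2
      linarith
    have hne₂ : ∀ i ∈ Finset.Icc 1 n, v₂ k ≠ t₂ i :=
      ne_roots n k t₂ ht₂ hk1 (by omega) hw₂.1 hw₂.2
    have hzero₂ : ∑ j ∈ Finset.Icc 1 n, (v₂ k - t₂ j)⁻¹ = 0 := by
      rw [← hsum₂ (v₂ k) hne₂]
      exact ((hiff₂ (v₂ k)).2 ⟨k, Finset.mem_Icc.2 ⟨hk1, hk2⟩, rfl⟩)
    by_contra hcon
    push_neg at hcon  -- v₂ k ≤ v₁ k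
    rcases eq_or_lt_of_le hcon with heq | hlt'
    · rw [heq] at hzero₂; linarith
    · -- v₂ k < v₁ k, both in (t₂ k, t₂ (k+1))
      have hub : v₁ k < t₂ (k + 1) := by
        have : t₁ (k + 1) ≤ t₂ (k + 1) := hle (k + 1) (Finset.mem_Icc.2 ⟨by omega, by omega⟩)
        linarith [hw₁.2]
      have := sum_inv_strict_anti n k t₂ ht₂ (by omega) hk1 hk2 hw₂.1 hlt' hub
      rw [hzero₂] at this
      linarith
  · -- v₂ k < v₁ (k+1)
    intro k hk1 hk2
    have hw₂ := hv₂ k hk1 (by omega)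
    have hw₁ := hv₁ (k + 1) (by omega) (by omega)
    by_contra hcon
    push_neg at hcon  -- v₁ (k+1) ≤ v₂ k
    set x := v₁ (k + 1) with hx_def
    have hx1 : t₁ (k + 1) < x := hw₁.1
    have hx2 : x < t₁ (k + 2) := hw₁.2
    have hx3 : x < t₂ (k + 1) := lt_of_le_of_lt hcon hw₂.2
    have hne₁ : ∀ i ∈ Finset.Icc 1 n, x ≠ t₁ i :=
      ne_roots n (k + 1) t₁ ht₁ (by omega) (by omega) hx1 hx2
    have hzero₁ : ∑ j ∈ Finset.Icc 1 n, (x - t₁ j)⁻¹ = 0 := by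
      rw [← hsum₁ x hne₁]
      exact ((hiff₁ x).2 ⟨k + 1, Finset.mem_Icc.2 ⟨by omega, by omega⟩, rfl⟩)
    have hneg : ∑ j ∈ Finset.Icc 1 n, (x - t₂ j)⁻¹ < 0 := by
      have := cmp_shift n k t₁ t₂ hn ht₁ ht₂ hlt hk1 hk2 hx1 hx2 hx3
      linarith
    have hne₂ : ∀ i ∈ Finset.Icc 1 n, v₂ k ≠ t₂ i :=
      ne_roots n k t₂ ht₂ hk1 (by omega) hw₂.1 hw₂.2
    have hzero₂ : ∑ j ∈ Finset.Icc 1 n, (v₂ k - t₂ j)⁻¹ = 0 := by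
      rw [← hsum₂ (v₂ k) hne₂]
      exact ((hiff₂ (v₂ k)).2 ⟨k, Finset.mem_Icc.2 ⟨hk1, by omega⟩, rfl⟩)
    rcases eq_or_lt_of_le hcon with heq | hlt'
    · rw [heq] at hzero₁
      rw [← heq] at hzero₂
      linarith
    · -- x < v₂ k, both in (t₂ k, t₂ (k+1))
      have hlb : t₂ k < x := by
        have := hlt k hk1 (by omega)
        linarith
      have := sum_inv_strict_anti n k t₂ ht₂ (by omega) hk1 (by omega) hlb hlt' hw₂.2
      rw [hzero₂] at this
      linarith
end

section
/- For every integer n ≥ 2 and every real a > 0, the set of points x ∈ [0,a] with |S_n(x)| = 1 is exactly {s_1, s_2, …, s_n}; that is, S_n has exactly n extremal points on [0,a], namely the points s_1 < s_2 < ⋯ < s_n. -/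
set_option maxHeartbeats 1000000

open Real

/-- `S_n(x) = T_n((x/a)(1 + cos(π/(2n))) − cos(π/(2n)))`, where `T_n` is the `n`-th
Chebyshev polynomial of the first kind. -/
noncomputable def chebS (n : ℕ) (a x : ℝ) : ℝ :=
  (Polynomial.Chebyshev.T ℝ (n : ℤ)).eval
    ((x / a) * (1 + Real.cos (π / (2 * n))) - Real.cos (π / (2 * n)))

/-- The Chebyshev-type points `s_i = a (cos((n−i)π/n) + cos(π/(2n))) / (1 + cos(π/(2n)))`,
`i = 1, …, n`. -/
noncomputable def chebPt (n : ℕ) (a : ℝ) (i : ℕ) : ℝ :=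
  a * (Real.cos (((n : ℝ) - (i : ℝ)) * π / n) + Real.cos (π / (2 * n))) /
    (1 + Real.cos (π / (2 * n)))

/-- For `n ≥ 2` and `a > 0`, the set of `x ∈ [0, a]` with `|S_n(x)| = 1` is exactly
`{s_1, …, s_n}`, and the points `s_1 < s_2 < ⋯ < s_n` are strictly increasing. -/
theorem stmt_3 (n : ℕ) (hn : 2 ≤ n) (a : ℝ) (ha : 0 < a) :
    (∀ x ∈ Set.Icc (0 : ℝ) a,
      (|chebS n a x| = 1 ↔ ∃ i, 1 ≤ i ∧ i ≤ n ∧ x = chebPt n a i)) ∧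
    (∀ i j, 1 ≤ i → i < j → j ≤ n → chebPt n a i < chebPt n a j) := by
  have hN : (0 : ℝ) < n := by positivity
  have hπ := Real.pi_pos
  set c : ℝ := Real.cos (π / (2 * n)) with hcdef
  have hang0 : 0 < π / (2 * n) := by positivity
  have hang2 : π / (2 * n) < π / 2 := by
    have hn2 : (2:ℝ) ≤ (n:ℝ) := by exact_mod_cast hn
    rw [div_lt_div_iff₀ (by positivity) (by norm_num)]
    nlinarith
  have hc0 : 0 < c := Real.cos_pos_of_mem_Ioo ⟨by linarith, hang2⟩
  have hc1 : c ≤ 1 := Real.cos_le_one _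
  have h1c : (0 : ℝ) < 1 + c := by linarith
  constructor
  · intro x hx
    constructor
    · intro habs
      -- forward direction
      set y : ℝ := (x / a) * (1 + c) - c with hydef
      have hxa0 : 0 ≤ x / a := div_nonneg hx.1 ha.le
      have hxa1 : x / a ≤ 1 := (div_le_one ha).2 hx.2
      have hyc : -c ≤ y := by
        rw [hydef]; nlinarith [mul_nonneg hxa0 h1c.le]
      have hy1 : -1 ≤ y := by linarith
      have hy2 : y ≤ 1 := by
        rw [hydef]; nlinarith [mul_le_mul_of_nonneg_right hxa1 h1c.le]
      set θ := Real.arccos y with hθdef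
      have hθ0 : 0 ≤ θ := Real.arccos_nonneg y
      have hθπ : θ ≤ π := Real.arccos_le_pi y
      have hcosθ : Real.cos θ = y := Real.cos_arccos hy1 hy2
      have hSval : chebS n a x = Real.cos ((n : ℝ) * θ) := by
        rw [chebS, ← hcdef, ← hydef, ← hcosθ, Polynomial.Chebyshev.T_real_cos]
        push_cast
        ring_nf
      rw [hSval] at habs
      have hsin : Real.sin ((n : ℝ) * θ) = 0 := by
        have h2 : Real.cos ((n : ℝ) * θ) ^ 2 = 1 := by
          rw [← sq_abs, habs]; norm_num
        nlinarith [Real.sin_sq_add_cos_sq ((n : ℝ) * θ)]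
      obtain ⟨k, hk⟩ := Real.sin_eq_zero_iff.1 hsin
      have hθval : θ = (k : ℝ) * π / n := by
        field_simp
        linarith [hk]
      -- bounds on k
      have hk0 : 0 ≤ k := by
        rcases le_or_gt 0 k with h | h
        · exact h
        exfalso
        have hkR : (k : ℝ) < 0 := by exact_mod_cast h
        have : (k : ℝ) * π / n < 0 :=
          div_neg_of_neg_of_pos (mul_neg_of_neg_of_pos hkR hπ) hN
        rw [← hθval] at this; linarith
      -- θ ≤ π - π/(2n)
      have hθub : θ ≤ π - π / (2 * n) := by
        by_contra h
        push_neg at h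
        have hlt : Real.cos θ < Real.cos (π - π / (2 * n)) :=
          Real.cos_lt_cos_of_nonneg_of_le_pi (by nlinarith) hθπ h
        rw [Real.cos_pi_sub] at hlt
        rw [hcosθ] at hlt
        rw [← hcdef] at hlt
        linarith
      have hkn : k < (n : ℤ) := by
        rcases lt_or_ge k (n : ℤ) with h | h
        · exact h
        exfalso
        have hk' : (n : ℝ) ≤ (k : ℝ) := by exact_mod_cast h
        have : π ≤ θ := by
          rw [hθval, le_div_iff₀ hN]
          nlinarith
        linarith
      -- define i
      have hkt : k.toNat < n := by omega
      refine ⟨n - k.toNat, by omega, Nat.sub_le _ _, ?_⟩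
      have h2 : ((k.toNat : ℕ) : ℝ) = (k : ℝ) := by
        exact_mod_cast Int.toNat_of_nonneg hk0
      have hik : ((n - k.toNat : ℕ) : ℝ) = (n : ℝ) - (k : ℝ) := by
        rw [Nat.cast_sub hkt.le, h2]
      rw [chebPt, ← hcdef, hik]
      have h3 : (n : ℝ) - ((n : ℝ) - (k : ℝ)) = (k : ℝ) := by ring
      rw [h3, ← hθval, hcosθ, hydef]
      field_simp
      ring
    · rintro ⟨i, hi1, hin, rfl⟩
      -- backward direction
      have hiR : (1 : ℝ) ≤ (i : ℝ) := by exact_mod_cast hi1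
      have hinR : (i : ℝ) ≤ (n : ℝ) := by exact_mod_cast hin
      set φ : ℝ := ((n : ℝ) - (i : ℝ)) * π / n with hφdef
      have hyval : chebPt n a i / a * (1 + c) - c = Real.cos φ := by
        rw [chebPt, ← hcdef, ← hφdef]
        field_simp
        ring
      have hS : chebS n a (chebPt n a i) = Real.cos ((n : ℝ) * φ) := by
        rw [chebS, ← hcdef, hyval, Polynomial.Chebyshev.T_real_cos]
        push_cast
        ring_nf
      rw [hS]
      have hφval : (n : ℝ) * φ = (((n : ℤ) - (i : ℤ) : ℤ) : ℝ) * π := by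
        rw [hφdef]
        push_cast
        field_simp
      rw [hφval]
      exact Real.abs_cos_int_mul_pi _
  · intro i j hi hij hjn
    have hiR : (1 : ℝ) ≤ (i : ℝ) := by exact_mod_cast hi
    have hijR : (i : ℝ) < (j : ℝ) := by exact_mod_cast hij
    have hjnR : (j : ℝ) ≤ (n : ℝ) := by exact_mod_cast hjn
    have hcos : Real.cos (((n : ℝ) - (i : ℝ)) * π / n) <
        Real.cos (((n : ℝ) - (j : ℝ)) * π / n) := by
      apply Real.cos_lt_cos_of_nonneg_of_le_pi
      · apply div_nonneg _ hN.le
        nlinarith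
      · rw [div_le_iff₀ hN]
        nlinarith
      · apply (div_lt_div_iff_of_pos_right hN).2
        nlinarith
    rw [chebPt, chebPt]
    apply (div_lt_div_iff_of_pos_right h1c).2
    nlinarith
end

section
/- Let n ≥ 2 and let 0 < s_1 < s_2 < ⋯ < s_n be real numbers. For each i let ω_{i,1} < ⋯ < ω_{i,n−1} denote the n−1 distinct real roots of L̄_i′. Then for every i ∈ {1,…,n−1} the roots of L̄_{i+1}′ and L̄_i′ strictly interlace: ω_{i+1,1} < ω_{i,1} < ω_{i+1,2} < ω_{i,2} < ⋯ < ω_{i+1,n−1} < ω_{i,n−1}. Consequently the full chain ω_{n,1} < ω_{n−1,1} < ⋯ < ω_{1,1} < ω_{n,2} < ⋯ < ω_{1,2} < ⋯ < ω_{n,n−1} < ⋯ < ω_{1,n−1} holds. -/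
open Finset

/-- The Lagrange basis polynomials without intercept for nodes `s_1, …, s_n`:
`L̄_i(z) = z ∏_{j≠i}(z − s_j) / (s_i ∏_{j≠i}(s_i − s_j))`. -/
noncomputable def Lbar (n : ℕ) (s : ℕ → ℝ) (i : ℕ) (z : ℝ) : ℝ :=
  (z * ∏ j ∈ (Finset.Icc 1 n).erase i, (z - s j)) /
    (s i * ∏ j ∈ (Finset.Icc 1 n).erase i, (s i - s j))

open Polynomial

namespace Stmt9Aux

/-- Sorted enumeration (index `0..n-1`) of the roots `{0} ∪ {s j : j ∈ [1,n] \ {q}}`. -/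
def eI (s : ℕ → ℝ) (q m : ℕ) : ℝ := if m = 0 then 0 else if m < q then s m else s (m + 1)

/-- The numerator polynomial of `Lbar`. -/
noncomputable def Q (n : ℕ) (s : ℕ → ℝ) (q : ℕ) : Polynomial ℝ :=
  X * ∏ j ∈ (Finset.Icc 1 n).erase q, (X - C (s j))

/-- Logarithmic derivative sum. -/
noncomputable def H (n : ℕ) (s : ℕ → ℝ) (q : ℕ) (x : ℝ) : ℝ :=
  x⁻¹ + ∑ j ∈ (Finset.Icc 1 n).erase q, (x - s j)⁻¹

lemma eval_Q (n : ℕ) (s : ℕ → ℝ) (q : ℕ) (x : ℝ) :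
    (Q n s q).eval x = x * ∏ j ∈ (Finset.Icc 1 n).erase q, (x - s j) := by
  simp [Q, eval_prod]

lemma eI_zero (s : ℕ → ℝ) (q : ℕ) : eI s q 0 = 0 := rfl

section basic
variable {n : ℕ} {s : ℕ → ℝ} (hn : 2 ≤ n)
  (hpos : ∀ i ∈ Finset.Icc 1 n, 0 < s i)
  (hmono : ∀ i j, 1 ≤ i → i < j → j ≤ n → s i < s j)

include hpos hmono in
lemma eI_mono {q : ℕ} (hq1 : 1 ≤ q) (hqn : q ≤ n) {m m' : ℕ} (h : m < m') (h' : m' ≤ n - 1) :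
    eI s q m < eI s q m' := by
  have hn1 : 1 ≤ n := le_trans hq1 hqn
  unfold eI
  rcases Nat.eq_zero_or_pos m with hm0 | hm1
  · subst hm0
    have hm'0 : m' ≠ 0 := by omega
    rw [if_pos rfl, if_neg hm'0]
    by_cases hc : m' < q
    · rw [if_pos hc]; exact hpos m' (by simp; omega)
    · rw [if_neg hc]; exact hpos (m' + 1) (by simp; omega)
  · have hm0 : m ≠ 0 := by omega
    have hm'0 : m' ≠ 0 := by omega
    rw [if_neg hm0, if_neg hm'0]
    by_cases hc : m < q <;> by_cases hc' : m' < q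
    · rw [if_pos hc, if_pos hc']; exact hmono m m' (by omega) h (by omega)
    · rw [if_pos hc, if_neg hc']; exact hmono m (m' + 1) (by omega) (by omega) (by omega)
    · omega
    · rw [if_neg hc, if_neg hc']; exact hmono (m + 1) (m' + 1) (by omega) (by omega) (by omega)

include hpos hmono in
lemma eI_mono_le {q : ℕ} (hq1 : 1 ≤ q) (hqn : q ≤ n) {m m' : ℕ} (h : m ≤ m') (h' : m' ≤ n - 1) :
    eI s q m ≤ eI s q m' := by
  rcases eq_or_lt_of_le h with rfl | hlt
  · exact le_refl _
  · exact (eI_mono hpos hmono hq1 hqn hlt h').le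

/-- Each node value `s j`, `j ∈ [1,n] \ {q}`, appears as some `eI s q m`, `1 ≤ m ≤ n-1`. -/
lemma s_eq_eI {q : ℕ} (hq1 : 1 ≤ q) (hqn : q ≤ n) {j : ℕ}
    (hj : j ∈ (Finset.Icc 1 n).erase q) :
    ∃ m, 1 ≤ m ∧ m ≤ n - 1 ∧ eI s q m = s j := by
  simp only [Finset.mem_erase, Finset.mem_Icc] at hj
  obtain ⟨hjq, hj1, hjn⟩ := hj
  rcases lt_or_gt_of_ne hjq with hlt | hgt
  · exact ⟨j, hj1, by omega, by unfold eI; rw [if_neg (by omega), if_pos hlt]⟩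
  · refine ⟨j - 1, by omega, by omega, ?_⟩
    unfold eI
    rw [if_neg (by omega), if_neg (by omega)]
    congr 1; omega

/-- Conversely, each `eI s q m` with `1 ≤ m ≤ n-1` is `s j` for some `j ∈ [1,n] \ {q}`. -/
lemma eI_eq_s {q : ℕ} (hq1 : 1 ≤ q) (hqn : q ≤ n) {m : ℕ} (hm1 : 1 ≤ m) (hm : m ≤ n - 1) :
    ∃ j ∈ (Finset.Icc 1 n).erase q, s j = eI s q m := by
  by_cases hc : m < q
  · exact ⟨m, by simp [Finset.mem_erase]; omega, by unfold eI; rw [if_neg (by omega), if_pos hc]⟩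
  · exact ⟨m + 1, by simp [Finset.mem_erase]; omega,
      by unfold eI; rw [if_neg (by omega), if_neg hc]⟩


include hmono in
lemma s_ne_s {q j : ℕ} (hq1 : 1 ≤ q) (hqn : q ≤ n)
    (hj : j ∈ (Finset.Icc 1 n).erase q) : s q - s j ≠ 0 := by
  simp only [Finset.mem_erase, Finset.mem_Icc] at hj
  obtain ⟨hjq, hj1, hjn⟩ := hj
  rcases lt_or_gt_of_ne hjq with hlt | hgt
  · exact sub_ne_zero.mpr (ne_of_gt (hmono j q hj1 hlt hqn))
  · exact sub_ne_zero.mpr (ne_of_lt (hmono q j hq1 hgt hjn))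

include hpos hmono in
lemma cst_ne {q : ℕ} (hq : q ∈ Finset.Icc 1 n) :
    s q * ∏ j ∈ (Finset.Icc 1 n).erase q, (s q - s j) ≠ 0 := by
  simp only [Finset.mem_Icc] at hq
  refine mul_ne_zero (ne_of_gt (hpos q (by simp [hq.1, hq.2]))) (Finset.prod_ne_zero_iff.mpr ?_)
  exact fun j hj => s_ne_s hmono hq.1 hq.2 hj

include hpos hmono in
lemma deriv_Lbar_eq {q : ℕ} (hq : q ∈ Finset.Icc 1 n) (x : ℝ) :
    deriv (Lbar n s q) x
      = ((Q n s q).derivative.eval x) / (s q * ∏ j ∈ (Finset.Icc 1 n).erase q, (s q - s j)) := by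
  have h1 : Lbar n s q = fun z => (Q n s q).eval z
      / (s q * ∏ j ∈ (Finset.Icc 1 n).erase q, (s q - s j)) := by
    funext z; rw [eval_Q]; rfl
  rw [h1, deriv_div_const]
  rw [Polynomial.deriv]

include hpos hmono in
lemma deriv_Lbar_zero_iff {q : ℕ} (hq : q ∈ Finset.Icc 1 n) (x : ℝ) :
    deriv (Lbar n s q) x = 0 ↔ (Q n s q).derivative.eval x = 0 := by
  rw [deriv_Lbar_eq hpos hmono hq, _root_.div_eq_zero_iff]
  have := cst_ne hpos hmono hq
  tauto

include hpos hmono in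
lemma gap_avoid {q : ℕ} (hq1 : 1 ≤ q) (hqn : q ≤ n) {k : ℕ} (hk1 : 1 ≤ k) (hkn : k ≤ n - 1)
    {x : ℝ} (hx : x ∈ Set.Ioo (eI s q (k - 1)) (eI s q k)) :
    0 < x ∧ ∀ j ∈ (Finset.Icc 1 n).erase q, x ≠ s j := by
  obtain ⟨hxl, hxu⟩ := hx
  have h0 : (0 : ℝ) ≤ eI s q (k - 1) := by
    have := eI_mono_le hpos hmono hq1 hqn (Nat.zero_le (k - 1)) (by omega)
    rwa [eI_zero] at this
  refine ⟨lt_of_le_of_lt h0 hxl, fun j hj hxj => ?_⟩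
  obtain ⟨m, hm1, hmn, hme⟩ := s_eq_eI (s := s) hq1 hqn hj
  rw [hxj, ← hme] at hxl hxu
  by_cases hc : m ≤ k - 1
  · exact absurd (eI_mono_le hpos hmono hq1 hqn hc (by omega)) (not_le.mpr hxl)
  · exact absurd (eI_mono_le hpos hmono hq1 hqn (by omega : k ≤ m) hmn) (not_le.mpr hxu)

lemma Q_eval_ne_zero {q : ℕ} (hq1 : 1 ≤ q) (hqn : q ≤ n) {x : ℝ}
    (hx0 : x ≠ 0) (hxj : ∀ j ∈ (Finset.Icc 1 n).erase q, x ≠ s j) :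
    (Q n s q).eval x ≠ 0 := by
  rw [eval_Q]
  exact mul_ne_zero hx0 (Finset.prod_ne_zero_iff.mpr fun j hj => sub_ne_zero.mpr (hxj j hj))

lemma Q_monic (q : ℕ) : (Q n s q).Monic :=
  monic_X.mul (monic_prod_of_monic _ _ fun j _ => monic_X_sub_C (s j))

include hn in
lemma Q_natDegree {q : ℕ} (hq : q ∈ Finset.Icc 1 n) : (Q n s q).natDegree = n := by
  have hcard : ((Finset.Icc 1 n).erase q).card = n - 1 := by
    rw [Finset.card_erase_of_mem hq, Nat.card_Icc]; omega
  have : (Q n s q).natDegree = 1 + (n - 1) := by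
    rw [Q, natDegree_mul X_ne_zero]
    · rw [natDegree_X]
      congr 1
      rw [natDegree_prod _ _ fun j _ => X_sub_C_ne_zero (s j)]
      simp [natDegree_X_sub_C, hcard]
    · exact (monic_prod_of_monic _ _ fun j _ => monic_X_sub_C (s j)).ne_zero
  omega

include hn in
lemma derivQ_ne {q : ℕ} (hq : q ∈ Finset.Icc 1 n) : (Q n s q).derivative ≠ 0 := by
  intro h
  have hc : ((Q n s q).derivative).coeff (n - 1) = 0 := by rw [h]; simp
  rw [coeff_derivative] at hc
  have hn1 : n - 1 + 1 = n := by omega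
  rw [hn1] at hc
  have : (Q n s q).coeff n = 1 := by
    have := (Q_monic (n := n) (s := s) q).leadingCoeff
    rwa [leadingCoeff, Q_natDegree hn hq] at this
  rw [this, one_mul] at hc
  have h2 : (0:ℝ) < ((n - 1 : ℕ) : ℝ) + 1 := by positivity
  linarith

lemma derivative_finset_prod (t : Finset ℕ) (f : ℕ → Polynomial ℝ) :
    derivative (∏ j ∈ t, f j) = ∑ j ∈ t, (∏ a ∈ t.erase j, f a) * derivative (f j) := by
  classical
  induction t using Finset.induction_on with
  | empty => simp
  | @insert i t hi ih =>
    rw [Finset.prod_insert hi, derivative_mul, ih, Finset.sum_insert hi,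
      Finset.erase_insert hi, Finset.mul_sum]
    have hterm : ∀ j ∈ t, (∏ a ∈ (insert i t).erase j, f a) * derivative (f j)
        = f i * ((∏ a ∈ t.erase j, f a) * derivative (f j)) := by
      intro j hj
      have hne : j ≠ i := fun h => hi (h ▸ hj)
      rw [Finset.erase_insert_of_ne (Ne.symm hne),
        Finset.prod_insert (fun h => hi (Finset.erase_subset _ _ h))]
      ring
    rw [Finset.sum_congr rfl hterm]
    ring

include hn hpos hmono in
lemma derivQ_eval_eq {q : ℕ} (hq1 : 1 ≤ q) (hqn : q ≤ n) {x : ℝ}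
    (hx0 : x ≠ 0) (hxj : ∀ j ∈ (Finset.Icc 1 n).erase q, x ≠ s j) :
    (Q n s q).derivative.eval x = (Q n s q).eval x * H n s q x := by
  set T := (Finset.Icc 1 n).erase q with hT
  have hder : (Q n s q).derivative
      = (∏ j ∈ T, (X - C (s j))) + X * ∑ j ∈ T, (∏ a ∈ T.erase j, (X - C (s a))) := by
    rw [Q, derivative_mul, derivative_X, one_mul, derivative_finset_prod]
    simp only [derivative_sub, derivative_X, derivative_C, sub_zero, mul_one]
    rfl
  rw [hder, eval_Q, H]
  rw [eval_add, eval_mul, eval_X, eval_finset_sum]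
  rw [mul_add, Finset.mul_sum, Finset.mul_sum]
  congr 1
  · rw [eval_prod]
    simp only [eval_sub, eval_X, eval_C]
    field_simp
    rfl
  · apply Finset.sum_congr rfl
    intro j hj
    have hne : x - s j ≠ 0 := sub_ne_zero.mpr (hxj j hj)
    have hprod : ∏ a ∈ T, (x - s a) = (x - s j) * ∏ a ∈ T.erase j, (x - s a) :=
      (Finset.mul_prod_erase T _ hj).symm
    rw [eval_prod]
    simp only [eval_sub, eval_X, eval_C]
    rw [hprod]
    field_simp

include hpos hmono in
lemma Q_eval_eI_zero {q : ℕ} (hq1 : 1 ≤ q) (hqn : q ≤ n) {m : ℕ} (hm : m ≤ n - 1) :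
    (Q n s q).eval (eI s q m) = 0 := by
  rcases Nat.eq_zero_or_pos m with rfl | hm1
  · rw [eI_zero, eval_Q, zero_mul]
  · obtain ⟨j, hj, hje⟩ := eI_eq_s (s := s) hq1 hqn hm1 hm
    rw [eval_Q]
    apply mul_eq_zero_of_right
    exact Finset.prod_eq_zero hj (by rw [hje, sub_self])

include hpos hmono in
lemma exists_root_gap {q : ℕ} (hq1 : 1 ≤ q) (hqn : q ≤ n) {k : ℕ} (hk1 : 1 ≤ k)
    (hkn : k ≤ n - 1) :
    ∃ c ∈ Set.Ioo (eI s q (k - 1)) (eI s q k), (Q n s q).derivative.eval c = 0 := by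
  have hab : eI s q (k - 1) < eI s q k := eI_mono hpos hmono hq1 hqn (by omega) hkn
  have hcont : ContinuousOn (fun x => (Q n s q).eval x) (Set.Icc (eI s q (k - 1)) (eI s q k)) :=
    ((Q n s q).continuous_aeval).continuousOn
  have hI : (Q n s q).eval (eI s q (k - 1)) = (Q n s q).eval (eI s q k) := by
    rw [Q_eval_eI_zero hpos hmono hq1 hqn (by omega), Q_eval_eI_zero hpos hmono hq1 hqn hkn]
  obtain ⟨c, hc, hc'⟩ := exists_deriv_eq_zero hab hcont hI
  rw [Polynomial.deriv] at hc'
  exact ⟨c, hc, hc'⟩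

include hn hpos hmono in
lemma omega_gap {q : ℕ} (hq : q ∈ Finset.Icc 1 n) (ω : ℕ → ℕ → ℝ)
    (hωmono : ∀ k l, 1 ≤ k → k < l → l ≤ n - 1 → ω q k < ω q l)
    (hroot : ∀ x : ℝ, (Q n s q).derivative.eval x = 0 ↔ ∃ k ∈ Finset.Icc 1 (n - 1), x = ω q k)
    {k : ℕ} (hk1 : 1 ≤ k) (hkn : k ≤ n - 1) :
    ω q k ∈ Set.Ioo (eI s q (k - 1)) (eI s q k) := by
  simp only [Finset.mem_Icc] at hq
  obtain ⟨hq1, hqn⟩ := hq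
  have hder : (Q n s q).derivative ≠ 0 := derivQ_ne hn (by simp [hq1, hqn])
  set Z : Finset ℝ := (Q n s q).derivative.roots.toFinset with hZ
  have hmemZ : ∀ x, x ∈ Z ↔ (Q n s q).derivative.eval x = 0 := by
    intro x
    rw [hZ, Multiset.mem_toFinset, mem_roots', IsRoot.def]
    tauto
  have hZle : Z.card ≤ n - 1 := by
    have h1 := Multiset.toFinset_card_le (Q n s q).derivative.roots
    have h2 := card_roots' (Q n s q).derivative
    have h3 : (Q n s q).derivative.natDegree ≤ n - 1 := by
      have h4 := natDegree_derivative_lt (p := Q n s q)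
        (by rw [Q_natDegree hn (by simp [hq1, hqn])]; omega)
      rw [Q_natDegree hn (by simp [hq1, hqn])] at h4
      omega
    exact le_trans h1 (le_trans h2 h3)
  have hex : ∀ j : Fin (n - 1), ∃ c,
      c ∈ Set.Ioo (eI s q (j : ℕ)) (eI s q ((j : ℕ) + 1)) ∧ (Q n s q).derivative.eval c = 0 := by
    intro j
    obtain ⟨c, hc, hc'⟩ := exists_root_gap hpos hmono hq1 hqn
      (k := (j : ℕ) + 1) (by omega) (by omega)
    refine ⟨c, ?_, hc'⟩
    simpa using hc
  choose c hc1 hc2 using hex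
  have hcmono : StrictMono c := by
    intro a b hab
    have h1 : c a < eI s q ((a : ℕ) + 1) := (hc1 a).2
    have h2 : eI s q ((a : ℕ) + 1) ≤ eI s q (b : ℕ) :=
      eI_mono_le hpos hmono hq1 hqn (by exact_mod_cast hab) (by omega)
    have h3 : eI s q (b : ℕ) < c b := (hc1 b).1
    linarith
  have hZcard : Z.card = n - 1 := by
    refine le_antisymm hZle ?_
    have := Finset.card_le_card_of_injOn (s := (Finset.univ : Finset (Fin (n - 1)))) (t := Z) c
      (fun j _ => (hmemZ _).2 (hc2 j)) (hcmono.injective.injOn)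
    simpa using this
  have humono : StrictMono (fun x : Fin (n - 1) => ω q ((x : ℕ) + 1)) := by
    intro a b hab
    exact hωmono _ _ (by omega) (by have : (a : ℕ) < b := hab; omega) (by omega)
  have huZ : ∀ x : Fin (n - 1), ω q ((x : ℕ) + 1) ∈ Z := by
    intro x
    exact (hmemZ _).2 ((hroot _).2 ⟨(x : ℕ) + 1, by simp, rfl⟩)
  have e1 := Finset.orderEmbOfFin_unique hZcard huZ humono
  have e2 := Finset.orderEmbOfFin_unique hZcard (fun j => (hmemZ _).2 (hc2 j)) hcmono
  have hkey : ω q k = c ⟨k - 1, by omega⟩ := by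
    have t1 := congrFun e1 ⟨k - 1, by omega⟩
    have t2 := congrFun e2 ⟨k - 1, by omega⟩
    simp only at t1 t2
    have : (k - 1) + 1 = k := by omega
    rw [this] at t1
    rw [t1, ← t2]
  have := hc1 ⟨k - 1, by omega⟩
  rw [← hkey] at this
  simp only at this
  have hk' : (k - 1) + 1 = k := by omega
  rwa [hk'] at this

omit hn hpos hmono in
lemma eI_agree {p q m : ℕ} (h1 : m < p) (h2 : m < q) : eI s p m = eI s q m := by
  unfold eI
  by_cases h0 : m = 0
  · simp [h0]
  · rw [if_neg h0, if_neg h0, if_pos h1, if_pos h2]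

omit hn hpos hmono in
lemma eI_small {q m : ℕ} (h0 : m ≠ 0) (h : m < q) : eI s q m = s m := by
  unfold eI; rw [if_neg h0, if_pos h]

omit hn hpos hmono in
lemma eI_big {q m : ℕ} (h0 : m ≠ 0) (h : ¬ m < q) : eI s q m = s (m + 1) := by
  unfold eI; rw [if_neg h0, if_neg h]

include hn hpos hmono in
lemma H_omega_zero {q : ℕ} (hq : q ∈ Finset.Icc 1 n) (ω : ℕ → ℕ → ℝ)
    (hωmono : ∀ k l, 1 ≤ k → k < l → l ≤ n - 1 → ω q k < ω q l)
    (hroot : ∀ x : ℝ, (Q n s q).derivative.eval x = 0 ↔ ∃ k ∈ Finset.Icc 1 (n - 1), x = ω q k)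
    {k : ℕ} (hk1 : 1 ≤ k) (hkn : k ≤ n - 1) :
    H n s q (ω q k) = 0 := by
  have hq' := hq
  simp only [Finset.mem_Icc] at hq'
  have hgap := omega_gap hn hpos hmono hq ω hωmono hroot hk1 hkn
  obtain ⟨hx0, hxj⟩ := gap_avoid hpos hmono hq'.1 hq'.2 hk1 hkn hgap
  have hev : (Q n s q).derivative.eval (ω q k) = 0 :=
    (hroot _).2 ⟨k, by simp [hk1, hkn], rfl⟩
  rw [derivQ_eval_eq hn hpos hmono hq'.1 hq'.2 (ne_of_gt hx0) hxj] at hev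
  rcases mul_eq_zero.mp hev with h | h
  · exact absurd h (Q_eval_ne_zero hq'.1 hq'.2 (ne_of_gt hx0) hxj)
  · exact h

include hpos hmono in
lemma H_anti {q : ℕ} (hq1 : 1 ≤ q) (hqn : q ≤ n) {k : ℕ} (hk1 : 1 ≤ k) (hkn : k ≤ n - 1)
    {x y : ℝ} (hx : x ∈ Set.Ioo (eI s q (k - 1)) (eI s q k))
    (hy : y ∈ Set.Ioo (eI s q (k - 1)) (eI s q k)) (hxy : x < y) :
    H n s q y < H n s q x := by
  have hx0 : 0 < x := (gap_avoid hpos hmono hq1 hqn hk1 hkn hx).1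
  unfold H
  have hterm : ∀ j ∈ (Finset.Icc 1 n).erase q, (y - s j)⁻¹ ≤ (x - s j)⁻¹ := by
    intro j hj
    obtain ⟨m, hm1, hmn, hme⟩ := s_eq_eI (s := s) hq1 hqn hj
    by_cases hc : m ≤ k - 1
    · have h1 : s j ≤ eI s q (k - 1) := hme ▸ eI_mono_le hpos hmono hq1 hqn hc (by omega)
      have h2 : 0 < x - s j := by have := hx.1; linarith
      exact (inv_strictAnti₀ h2 (by linarith)).le
    · have h1 : eI s q k ≤ s j := hme ▸ eI_mono_le hpos hmono hq1 hqn (by omega) hmn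
      have h2 : y - s j < 0 := by have := hy.2; linarith
      have h3 : x - s j < 0 := by linarith
      exact ((inv_lt_inv_of_neg h2 h3).2 (by linarith)).le
  have h1 : y⁻¹ < x⁻¹ := inv_strictAnti₀ hx0 hxy
  exact add_lt_add_of_lt_of_le h1 (Finset.sum_le_sum hterm)

include hn hpos hmono in
lemma lt_of_H_neg {q : ℕ} (hq : q ∈ Finset.Icc 1 n) (ω : ℕ → ℕ → ℝ)
    (hωmono : ∀ k l, 1 ≤ k → k < l → l ≤ n - 1 → ω q k < ω q l)
    (hroot : ∀ x : ℝ, (Q n s q).derivative.eval x = 0 ↔ ∃ k ∈ Finset.Icc 1 (n - 1), x = ω q k)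
    {k : ℕ} (hk1 : 1 ≤ k) (hkn : k ≤ n - 1)
    {x : ℝ} (hx : x ∈ Set.Ioo (eI s q (k - 1)) (eI s q k)) (hH : H n s q x < 0) :
    ω q k < x := by
  have hq' := hq
  simp only [Finset.mem_Icc] at hq'
  have hw := omega_gap hn hpos hmono hq ω hωmono hroot hk1 hkn
  have hHw : H n s q (ω q k) = 0 := H_omega_zero hn hpos hmono hq ω hωmono hroot hk1 hkn
  by_contra h
  push_neg at h
  rcases eq_or_lt_of_le h with rfl | hlt
  · rw [hHw] at hH; exact lt_irrefl _ hH
  · have := H_anti hpos hmono hq'.1 hq'.2 hk1 hkn hx hw hlt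
    rw [hHw] at this
    linarith

include hn hpos hmono in
lemma lt_of_H_pos {q : ℕ} (hq : q ∈ Finset.Icc 1 n) (ω : ℕ → ℕ → ℝ)
    (hωmono : ∀ k l, 1 ≤ k → k < l → l ≤ n - 1 → ω q k < ω q l)
    (hroot : ∀ x : ℝ, (Q n s q).derivative.eval x = 0 ↔ ∃ k ∈ Finset.Icc 1 (n - 1), x = ω q k)
    {k : ℕ} (hk1 : 1 ≤ k) (hkn : k ≤ n - 1)
    {x : ℝ} (hx : x ∈ Set.Ioo (eI s q (k - 1)) (eI s q k)) (hH : 0 < H n s q x) :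
    x < ω q k := by
  have hq' := hq
  simp only [Finset.mem_Icc] at hq'
  have hw := omega_gap hn hpos hmono hq ω hωmono hroot hk1 hkn
  have hHw : H n s q (ω q k) = 0 := H_omega_zero hn hpos hmono hq ω hωmono hroot hk1 hkn
  by_contra h
  push_neg at h
  rcases eq_or_lt_of_le h with rfl | hlt
  · rw [hHw] at hH; exact lt_irrefl _ hH
  · have := H_anti hpos hmono hq'.1 hq'.2 hk1 hkn hw hx hlt
    rw [hHw] at this
    linarith

omit hn hpos hmono in
lemma H_diff {p q : ℕ} (hp : p ∈ Finset.Icc 1 n) (hq : q ∈ Finset.Icc 1 n) (hpq : p ≠ q)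
    (x : ℝ) : H n s q x = H n s p x + (x - s p)⁻¹ - (x - s q)⁻¹ := by
  have hpe : p ∈ (Finset.Icc 1 n).erase q := Finset.mem_erase.2 ⟨hpq, hp⟩
  have hqe : q ∈ (Finset.Icc 1 n).erase p := Finset.mem_erase.2 ⟨(Ne.symm hpq), hq⟩
  unfold H
  rw [← Finset.add_sum_erase _ _ hpe, ← Finset.add_sum_erase _ _ hqe]
  rw [Finset.erase_right_comm]
  ring

include hn hpos hmono in
lemma L1 (ω : ℕ → ℕ → ℝ)
    (hωmono : ∀ i ∈ Finset.Icc 1 n, ∀ k l, 1 ≤ k → k < l → l ≤ n - 1 → ω i k < ω i l)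
    (hroot : ∀ i ∈ Finset.Icc 1 n, ∀ x : ℝ,
      (Q n s i).derivative.eval x = 0 ↔ ∃ k ∈ Finset.Icc 1 (n - 1), x = ω i k)
    {p q k : ℕ} (hp1 : 1 ≤ p) (hpq : p < q) (hqn : q ≤ n) (hk1 : 1 ≤ k) (hkn : k ≤ n - 1) :
    ω q k < ω p k := by
  have hpn : p ≤ n := by omega
  have hq1 : 1 ≤ q := by omega
  have hpI : p ∈ Finset.Icc 1 n := by simp [hp1, hpn]
  have hqI : q ∈ Finset.Icc 1 n := by simp [hq1, hqn]
  have hspq : s p < s q := hmono p q hp1 hpq hqn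
  set x := ω p k with hxdef
  have hgx : x ∈ Set.Ioo (eI s p (k - 1)) (eI s p k) :=
    omega_gap hn hpos hmono hpI ω (hωmono p hpI) (hroot p hpI) hk1 hkn
  have hHp : H n s p x = 0 :=
    H_omega_zero hn hpos hmono hpI ω (hωmono p hpI) (hroot p hpI) hk1 hkn
  have hgq := omega_gap hn hpos hmono hqI ω (hωmono q hqI) (hroot q hqI) hk1 hkn
  -- the H-argument, applicable whenever `x` lies in gap `k` of `q` and off `s p`, `s q`
  have key : x ∈ Set.Ioo (eI s q (k - 1)) (eI s q k) →
      ((x < s p ∧ x < s q) ∨ (s p < x ∧ s q < x)) → ω q k < x := by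
    intro hg hcase
    have hHq : H n s q x = (x - s p)⁻¹ - (x - s q)⁻¹ := by
      rw [H_diff (s := s) hpI hqI (by omega), hHp, zero_add]
    have hneg : H n s q x < 0 := by
      rw [hHq]
      rcases hcase with ⟨h1, h2⟩ | ⟨h1, h2⟩
      · have ha : x - s p < 0 := by linarith
        have hb : x - s q < 0 := by linarith
        have := (inv_lt_inv_of_neg ha hb).2 (by linarith)
        linarith
      · have ha : 0 < x - s q := by linarith
        have := inv_strictAnti₀ ha (by linarith : x - s q < x - s p)
        linarith
    exact lt_of_H_neg hn hpos hmono hqI ω (hωmono q hqI) (hroot q hqI) hk1 hkn hg hneg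
  by_cases hkp : k < p
  · -- common gap, x < s k ≤ ... < s p
    have hg : x ∈ Set.Ioo (eI s q (k - 1)) (eI s q k) := by
      rwa [← eI_agree (s := s) (by omega : k - 1 < p) (by omega : k - 1 < q),
        ← eI_agree (s := s) hkp (by omega : k < q)]
    have hxk : x < s k := by
      have := hgx.2; rwa [eI_small (s := s) (by omega) hkp] at this
    have hkq : s k < s p := hmono k p hk1 hkp hpn
    exact key hg (Or.inl ⟨by linarith, by linarith⟩)
  · rcases eq_or_lt_of_le (not_lt.mp hkp) with hkp' | hkp'
    · -- k = p
      by_cases hsx : s p ≤ x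
      · have h1 : ω q k < eI s q k := hgq.2
        rw [eI_small (s := s) (by omega) (by omega : k < q)] at h1
        have : s k = s p := by rw [hkp']
        linarith
      · push_neg at hsx
        have hg : x ∈ Set.Ioo (eI s q (k - 1)) (eI s q k) := by
          constructor
          · have := hgx.1
            rwa [eI_agree (s := s) (by omega : k - 1 < p) (by omega : k - 1 < q)] at this
          · rw [eI_small (s := s) (by omega) (by omega : k < q), ← hkp']
            exact hsx
        exact key hg (Or.inl ⟨hsx, by linarith⟩)
    · -- p < k
      have hk2 : 2 ≤ k := by omega
      have hxk : s k < x := by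
        have := hgx.1
        have he : eI s p (k - 1) = s k := by
          rw [eI_big (s := s) (by omega) (by omega)]
          congr 1; omega
        rwa [he] at this
      by_cases hkq : k < q
      · have h1 : ω q k < eI s q k := hgq.2
        rw [eI_small (s := s) (by omega) hkq] at h1
        linarith
      · -- q ≤ k
        have hsqk : s q ≤ s k := by
          rcases eq_or_lt_of_le (not_lt.mp hkq) with h | h
          · rw [h]
          · exact (hmono q k hq1 h (by omega)).le
        have hg : x ∈ Set.Ioo (eI s q (k - 1)) (eI s q k) := by
          constructor
          · by_cases hc : k - 1 < q
            · -- k = q, lower end is eI q (q-1) ≤ s k < x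
              have hlow : eI s q (k - 1) ≤ s k := by
                rcases Nat.eq_zero_or_pos (k - 1) with h0 | h1
                · rw [h0, eI_zero]; exact (hpos k (by simp; omega)).le
                · rw [eI_small (s := s) (by omega) hc]
                  exact (hmono (k - 1) k (by omega) (by omega) (by omega)).le
              linarith
            · rw [eI_big (s := s) (by omega) hc]
              have : k - 1 + 1 = k := by omega
              rw [this]
              linarith
          · rw [eI_big (s := s) (by omega) (by omega)]
            have := hgx.2
            rwa [eI_big (s := s) (by omega) (by omega)] at this
        exact key hg (Or.inr ⟨by linarith, by linarith⟩)

include hn hpos hmono in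
lemma L2 (ω : ℕ → ℕ → ℝ)
    (hωmono : ∀ i ∈ Finset.Icc 1 n, ∀ k l, 1 ≤ k → k < l → l ≤ n - 1 → ω i k < ω i l)
    (hroot : ∀ i ∈ Finset.Icc 1 n, ∀ x : ℝ,
      (Q n s i).derivative.eval x = 0 ↔ ∃ k ∈ Finset.Icc 1 (n - 1), x = ω i k)
    {p q k : ℕ} (hp1 : 1 ≤ p) (hpn : p ≤ n) (hq1 : 1 ≤ q) (hqn : q ≤ n)
    (hk1 : 1 ≤ k) (hkn : k ≤ n - 2) :
    ω p k < ω q (k + 1) := by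
  have hpI : p ∈ Finset.Icc 1 n := by simp [hp1, hpn]
  have hqI : q ∈ Finset.Icc 1 n := by simp [hq1, hqn]
  rcases eq_or_ne p q with rfl | hpq
  · exact hωmono p hpI k (k + 1) hk1 (by omega) (by omega)
  set x := ω p k with hxdef
  have hgx : x ∈ Set.Ioo (eI s p (k - 1)) (eI s p k) :=
    omega_gap hn hpos hmono hpI ω (hωmono p hpI) (hroot p hpI) hk1 (by omega)
  have hHp : H n s p x = 0 :=
    H_omega_zero hn hpos hmono hpI ω (hωmono p hpI) (hroot p hpI) hk1 (by omega)
  have hgy : ω q (k + 1) ∈ Set.Ioo (eI s q (k + 1 - 1)) (eI s q (k + 1)) :=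
    omega_gap hn hpos hmono hqI ω (hωmono q hqI) (hroot q hqI) (by omega) (by omega)
  have hk1' : k + 1 - 1 = k := by omega
  rw [hk1'] at hgy
  by_cases hle : x ≤ eI s q k
  · exact lt_of_le_of_lt hle hgy.1
  · push_neg at hle
    have hlt : eI s q k < eI s p k := lt_of_lt_of_le hle hgx.2.le
    -- this forces p ≤ k and k < q
    have hcase : p ≤ k ∧ k < q := by
      by_contra hcon
      have : eI s p k ≤ eI s q k := by
        by_cases h1 : k < p <;> by_cases h2 : k < q
        · rw [eI_agree (s := s) h1 h2]
        · rw [eI_small (s := s) (by omega) h1, eI_big (s := s) (by omega) h2]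
          exact (hmono k (k + 1) hk1 (by omega) (by omega)).le
        · omega
        · rw [eI_big (s := s) (by omega) h1, eI_big (s := s) (by omega) h2]
      exact absurd this (not_le.mpr hlt)
    obtain ⟨hpk, hkq⟩ := hcase
    have hxl : s k < x := by rwa [eI_small (s := s) (by omega) hkq] at hle
    have hxu : x < s (k + 1) := by
      have := hgx.2
      rwa [eI_big (s := s) (by omega) (by omega)] at this
    have hg : x ∈ Set.Ioo (eI s q (k + 1 - 1)) (eI s q (k + 1)) := by
      rw [hk1']
      refine ⟨hle, ?_⟩
      by_cases hc : k + 1 < q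
      · rw [eI_small (s := s) (by omega) hc]
        exact hxu
      · rw [eI_big (s := s) (by omega) hc]
        have : s (k + 1) < s (k + 1 + 1) := hmono (k + 1) (k + 2) (by omega) (by omega) (by omega)
        linarith
    have hHq : 0 < H n s q x := by
      rw [H_diff (s := s) hpI hqI hpq, hHp, zero_add]
      have h1 : 0 < x - s p := by
        have : s p ≤ s k := by
          rcases eq_or_lt_of_le hpk with h | h
          · rw [h]
          · exact (hmono p k hp1 h (by omega)).le
        linarith
      have h2 : x - s q < 0 := by
        have : s (k + 1) ≤ s q := by
          rcases eq_or_lt_of_le (by omega : k + 1 ≤ q) with h | h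
          · rw [h]
          · exact (hmono (k + 1) q (by omega) h hqn).le
        linarith
      have h3 : 0 < (x - s p)⁻¹ := inv_pos.2 h1
      have h4 : (x - s q)⁻¹ < 0 := inv_lt_zero.2 h2
      linarith
    exact lt_of_H_pos hn hpos hmono hqI ω (hωmono q hqI) (hroot q hqI) (by omega) (by omega)
      hg hHq

end basic

end Stmt9Aux

/-- For `n ≥ 2`, nodes `0 < s_1 < ⋯ < s_n`, and `ω_{i,1} < ⋯ < ω_{i,n−1}` the roots of
`L̄_i′`: for each `i` the roots of `L̄_{i+1}′` and `L̄_i′` strictly interlace,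
`ω_{i+1,k} < ω_{i,k} < ω_{i+1,k+1}`, and consequently the full chain
`ω_{n,1} < ⋯ < ω_{1,1} < ω_{n,2} < ⋯ < ω_{1,2} < ⋯ < ω_{n,n−1} < ⋯ < ω_{1,n−1}` holds. -/
theorem stmt_9 (n : ℕ) (hn : 2 ≤ n) (s : ℕ → ℝ)
    (hpos : ∀ i ∈ Finset.Icc 1 n, 0 < s i)
    (hmono : ∀ i j, 1 ≤ i → i < j → j ≤ n → s i < s j)
    (ω : ℕ → ℕ → ℝ)
    (hωmono : ∀ i ∈ Finset.Icc 1 n, ∀ k l, 1 ≤ k → k < l → l ≤ n - 1 → ω i k < ω i l)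
    (hωroot : ∀ i ∈ Finset.Icc 1 n, ∀ x : ℝ,
      deriv (Lbar n s i) x = 0 ↔ ∃ k ∈ Finset.Icc 1 (n - 1), x = ω i k) :
    (∀ i ∈ Finset.Icc 1 (n - 1), ∀ k ∈ Finset.Icc 1 (n - 1),
      ω (i + 1) k < ω i k ∧ (k ≤ n - 2 → ω i k < ω (i + 1) (k + 1))) ∧
    (∀ i ∈ Finset.Icc 1 n, ∀ i' ∈ Finset.Icc 1 n,
      ∀ k ∈ Finset.Icc 1 (n - 1), ∀ k' ∈ Finset.Icc 1 (n - 1),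
        (k < k' ∨ (k = k' ∧ i' < i)) → ω i k < ω i' k') := by
  have hroot' : ∀ i ∈ Finset.Icc 1 n, ∀ x : ℝ,
      (Stmt9Aux.Q n s i).derivative.eval x = 0 ↔ ∃ k ∈ Finset.Icc 1 (n - 1), x = ω i k := by
    intro i hi x
    rw [← Stmt9Aux.deriv_Lbar_zero_iff hpos hmono hi x]
    exact hωroot i hi x
  constructor
  · intro i hi k hk
    simp only [Finset.mem_Icc] at hi hk
    refine ⟨Stmt9Aux.L1 hn hpos hmono ω hωmono hroot' hi.1 (Nat.lt_succ_self i) (by omega)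
      hk.1 hk.2, fun hk2 => ?_⟩
    exact Stmt9Aux.L2 hn hpos hmono ω hωmono hroot' hi.1 (by omega) (by omega) (by omega)
      hk.1 hk2
  · intro i hi i' hi' k hk k' hk' h
    simp only [Finset.mem_Icc] at hi hi' hk hk'
    rcases h with hlt | ⟨rfl, hii⟩
    · have h1 : ω i k < ω i' (k + 1) :=
        Stmt9Aux.L2 hn hpos hmono ω hωmono hroot' hi.1 hi.2 hi'.1 hi'.2 hk.1 (by omega)
      rcases eq_or_lt_of_le (by omega : k + 1 ≤ k') with heq | hlt2
      · rwa [heq] at h1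
      · exact lt_trans h1 (hωmono i' (by simp [hi'.1, hi'.2]) (k + 1) k' (by omega) hlt2 hk'.2)
    · exact Stmt9Aux.L1 hn hpos hmono ω hωmono hroot' hi'.1 hii hi.2 hk.1 hk.2
end

section
/- Let n ≥ 2 and let 0 < s_1 < s_2 < ⋯ < s_n be real numbers. For each i let ω_{i,1} < ⋯ < ω_{i,n−1} denote the n−1 distinct real roots of L̄_i′, and for j = 1,…,n define the open intervals A_j = (ω_{1,j−1}, ω_{n,j}) with the conventions ω_{1,0} = −∞ and ω_{n,n} = +∞. Then for every j ∈ {1,…,n} and every z ∈ A_j, one has (−1)^{n+j}·(−1)^{n−i}·L̄_i′(z) > 0 for all i ∈ {1,…,n}; in particular, on A_j all the quantities (−1)^{n−i}·L̄_i′(z), i = 1,…,n, are nonzero and have the common sign (−1)^{n+j}. -/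
open Finset

set_option maxHeartbeats 800000

namespace S11
open Polynomial

noncomputable def ss (s : ℕ → ℝ) (j : ℕ) : ℝ := if j = 0 then 0 else s j

def Ei (n i : ℕ) : Finset ℕ := insert 0 ((Finset.Icc 1 n).erase i)

noncomputable def pp (n : ℕ) (s : ℕ → ℝ) (i : ℕ) : ℝ[X] :=
  ∏ j ∈ Ei n i, (X - C (ss s j))

noncomputable def Ci (n : ℕ) (s : ℕ → ℝ) (i : ℕ) : ℝ :=
  s i * ∏ j ∈ (Finset.Icc 1 n).erase i, (s i - s j)

noncomputable def Ff (n : ℕ) (s : ℕ → ℝ) (i : ℕ) (z : ℝ) : ℝ :=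
  ∑ j ∈ Ei n i, (z - ss s j)⁻¹

noncomputable def rr (s : ℕ → ℝ) (i k : ℕ) : ℝ :=
  if k = 1 then 0 else if k ≤ i then s (k - 1) else s k

lemma zero_not_mem (n i : ℕ) : (0:ℕ) ∉ (Finset.Icc 1 n).erase i := by
  simp

lemma card_Ei (n i : ℕ) (hi : i ∈ Finset.Icc 1 n) : (Ei n i).card = n := by
  rw [Ei, Finset.card_insert_of_notMem (zero_not_mem n i),
    Finset.card_erase_of_mem hi, Nat.card_Icc]
  simp only [Finset.mem_Icc] at hi
  omega

lemma eval_pp (n : ℕ) (s : ℕ → ℝ) (i : ℕ) (z : ℝ) :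
    (pp n s i).eval z = z * ∏ j ∈ (Finset.Icc 1 n).erase i, (z - s j) := by
  rw [pp, eval_prod, Ei, Finset.prod_insert (zero_not_mem n i)]
  have h : ∀ j ∈ (Finset.Icc 1 n).erase i, eval z (X - C (ss s j)) = z - s j := by
    intro j hj
    have : j ≠ 0 := by
      rcases Finset.mem_erase.mp hj with ⟨_, hj2⟩
      simp only [Finset.mem_Icc] at hj2; omega
    simp [ss, this]
  rw [Finset.prod_congr rfl h]
  simp [ss]

lemma Lbar_eq (n : ℕ) (s : ℕ → ℝ) (i : ℕ) :
    Lbar n s i = fun z => (Polynomial.C (Ci n s i)⁻¹ * pp n s i).eval z := by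
  funext z
  rw [eval_mul, eval_C, eval_pp, Lbar, Ci, div_eq_inv_mul]

lemma deriv_Lbar (n : ℕ) (s : ℕ → ℝ) (i : ℕ) (z : ℝ) :
    deriv (Lbar n s i) z = (Ci n s i)⁻¹ * ((pp n s i).derivative.eval z) := by
  rw [Lbar_eq, Polynomial.deriv, derivative_C_mul, eval_mul, eval_C]

lemma prod_neg_sign (t : Finset ℕ) (f : ℕ → ℝ) (h : ∀ k ∈ t, f k < 0) :
    0 < (-1:ℝ)^t.card * ∏ k ∈ t, f k := by
  have h1 : ∏ k ∈ t, f k = (-1:ℝ)^t.card * ∏ k ∈ t, (-f k) := by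
    rw [← Finset.prod_const, ← Finset.prod_mul_distrib]; simp
  have h2 : 0 < ∏ k ∈ t, (-f k) :=
    Finset.prod_pos fun k hk => neg_pos.mpr (h k hk)
  rw [h1, ← mul_assoc, ← pow_add]
  have : Even (t.card + t.card) := ⟨t.card, rfl⟩
  rw [this.neg_one_pow, one_mul]; exact h2

lemma Ci_sign (n : ℕ) (s : ℕ → ℝ)
    (hpos : ∀ i ∈ Finset.Icc 1 n, 0 < s i)
    (hmono : ∀ i j, 1 ≤ i → i < j → j ≤ n → s i < s j)
    (i : ℕ) (hi : i ∈ Finset.Icc 1 n) :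
    0 < (-1:ℝ)^(n-i) * Ci n s i := by
  simp only [Finset.mem_Icc] at hi
  have hsplit : (Finset.Icc 1 n).erase i = Finset.Icc 1 (i-1) ∪ Finset.Icc (i+1) n := by
    ext a; simp only [Finset.mem_erase, Finset.mem_Icc, Finset.mem_union]; omega
  have hdisj : Disjoint (Finset.Icc 1 (i-1)) (Finset.Icc (i+1) n) := by
    rw [Finset.disjoint_left]; intro a ha hb
    simp only [Finset.mem_Icc] at ha hb; omega
  rw [Ci, hsplit, Finset.prod_union hdisj]
  have h1 : 0 < ∏ j ∈ Finset.Icc 1 (i-1), (s i - s j) := by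
    refine Finset.prod_pos fun j hj => ?_
    simp only [Finset.mem_Icc] at hj
    have := hmono j i (by omega) (by omega) (by omega); linarith
  have h2 : 0 < (-1:ℝ)^(n-i) * ∏ j ∈ Finset.Icc (i+1) n, (s i - s j) := by
    have hcard : (Finset.Icc (i+1) n).card = n - i := by rw [Nat.card_Icc]; omega
    rw [← hcard]
    refine prod_neg_sign _ _ fun j hj => ?_
    simp only [Finset.mem_Icc] at hj
    have := hmono i j (by omega) (by omega) (by omega); linarith
  have hs : 0 < s i := hpos i (by simp only [Finset.mem_Icc]; omega)
  have key := mul_pos (mul_pos hs h1) h2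
  nlinarith [key]

lemma pp_monic (n : ℕ) (s : ℕ → ℝ) (i : ℕ) : (pp n s i).Monic :=
  monic_prod_of_monic _ _ fun _ _ => monic_X_sub_C _

lemma pp_natDegree (n : ℕ) (s : ℕ → ℝ) (i : ℕ) (hi : i ∈ Finset.Icc 1 n) :
    (pp n s i).natDegree = n := by
  rw [pp, natDegree_prod_of_monic _ _ fun _ _ => monic_X_sub_C _]
  simp [natDegree_X_sub_C, card_Ei n i hi]

lemma Ci_ne (n : ℕ) (s : ℕ → ℝ)
    (hpos : ∀ i ∈ Finset.Icc 1 n, 0 < s i)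
    (hmono : ∀ i j, 1 ≤ i → i < j → j ≤ n → s i < s j)
    (i : ℕ) (hi : i ∈ Finset.Icc 1 n) : Ci n s i ≠ 0 := by
  have h := Ci_sign n s hpos hmono i hi
  intro h0; rw [h0, mul_zero] at h; exact lt_irrefl 0 h

lemma pp_deriv_factor (n : ℕ) (hn : 2 ≤ n) (s : ℕ → ℝ)
    (hpos : ∀ i ∈ Finset.Icc 1 n, 0 < s i)
    (hmono : ∀ i j, 1 ≤ i → i < j → j ≤ n → s i < s j)
    (ω : ℕ → ℕ → ℝ)
    (hωmono : ∀ i ∈ Finset.Icc 1 n, ∀ k l, 1 ≤ k → k < l → l ≤ n - 1 → ω i k < ω i l)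
    (hωroot : ∀ i ∈ Finset.Icc 1 n, ∀ x : ℝ,
      deriv (Lbar n s i) x = 0 ↔ ∃ k ∈ Finset.Icc 1 (n - 1), x = ω i k)
    (i : ℕ) (hi : i ∈ Finset.Icc 1 n) :
    derivative (pp n s i)
      = C (n:ℝ) * ∏ k ∈ Finset.Icc 1 (n-1), (X - C (ω i k)) := by
  set Q : ℝ[X] := C (n:ℝ) * ∏ k ∈ Finset.Icc 1 (n-1), (X - C (ω i k)) with hQ
  have hCine := Ci_ne n s hpos hmono i hi
  have hroot : ∀ k ∈ Finset.Icc 1 (n-1), (derivative (pp n s i)).eval (ω i k) = 0 := by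
    intro k hk
    have h0 : deriv (Lbar n s i) (ω i k) = 0 := (hωroot i hi (ω i k)).mpr ⟨k, hk, rfl⟩
    rw [deriv_Lbar] at h0
    rcases mul_eq_zero.mp h0 with h | h
    · exact absurd (inv_eq_zero.mp h) hCine
    · exact h
  have hpd : (derivative (pp n s i)).natDegree ≤ n - 1 :=
    le_trans (natDegree_derivative_le _) (by rw [pp_natDegree n s i hi])
  have hprodmonic : (∏ k ∈ Finset.Icc 1 (n-1), (X - C (ω i k))).Monic :=
    monic_prod_of_monic _ _ fun _ _ => monic_X_sub_C _
  have hproddeg : (∏ k ∈ Finset.Icc 1 (n-1), (X - C (ω i k))).natDegree = n - 1 := by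
    rw [natDegree_prod_of_monic _ _ fun _ _ => monic_X_sub_C _]
    simp [natDegree_X_sub_C, Nat.card_Icc]
  have hQdeg : Q.natDegree ≤ n - 1 := by
    rw [hQ]; exact le_trans (natDegree_C_mul_le _ _) (le_of_eq hproddeg)
  have hc1 : (∏ k ∈ Finset.Icc 1 (n-1), (X - C (ω i k))).coeff (n-1) = 1 := by
    have h := hprodmonic.coeff_natDegree
    rwa [hproddeg] at h
  have hQcoeff : Q.coeff (n-1) = n := by
    rw [hQ, coeff_C_mul, hc1, mul_one]
  have hDcoeff : (derivative (pp n s i)).coeff (n-1) = n := by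
    rw [coeff_derivative]
    have h1 : n - 1 + 1 = n := by omega
    rw [h1]
    have h2 : (pp n s i).coeff n = 1 := by
      have h := (pp_monic n s i).coeff_natDegree
      rwa [pp_natDegree n s i hi] at h
    rw [h2, one_mul]
    norm_cast
  set R : ℝ[X] := derivative (pp n s i) - Q with hR
  have hRdeg : R.natDegree ≤ n - 1 := le_trans (natDegree_sub_le _ _) (max_le hpd hQdeg)
  have hRcoeff : R.coeff (n-1) = 0 := by rw [hR, coeff_sub, hDcoeff, hQcoeff, sub_self]
  have hReval : ∀ k ∈ Finset.Icc 1 (n-1), R.eval (ω i k) = 0 := by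
    intro k hk
    rw [hR, eval_sub, hroot k hk, hQ, eval_mul, eval_prod,
      Finset.prod_eq_zero hk (by simp)]
    simp
  have hR0 : R = 0 := by
    by_contra hne
    have hlt : R.natDegree < n - 1 := by
      rcases lt_or_eq_of_le hRdeg with h | h
      · exact h
      · exfalso
        have : R.leadingCoeff = 0 := by rw [Polynomial.leadingCoeff, h, hRcoeff]
        exact hne (Polynomial.leadingCoeff_eq_zero.mp this)
    have hinj : Function.Injective
        (fun k : (Finset.Icc 1 (n-1) : Finset ℕ) => ω i (k:ℕ)) := by
      rintro ⟨a, ha⟩ ⟨b, hb⟩ hab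
      simp only [Finset.mem_Icc] at ha hb
      apply Subtype.ext
      simp only at hab
      rcases lt_trichotomy a b with h|h|h
      · exact absurd hab (ne_of_lt (hωmono i hi a b ha.1 h hb.2))
      · exact h
      · exact absurd hab.symm (ne_of_lt (hωmono i hi b a hb.1 h ha.2))
    refine hne (Polynomial.eq_zero_of_natDegree_lt_card_of_eval_eq_zero R hinj
      (fun k => hReval k k.2) ?_)
    rwa [Fintype.card_coe, Nat.card_Icc, Nat.add_sub_cancel]
  have := sub_eq_zero.mp hR0
  exact this

lemma deriv_Lbar_eq (n : ℕ) (hn : 2 ≤ n) (s : ℕ → ℝ)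
    (hpos : ∀ i ∈ Finset.Icc 1 n, 0 < s i)
    (hmono : ∀ i j, 1 ≤ i → i < j → j ≤ n → s i < s j)
    (ω : ℕ → ℕ → ℝ)
    (hωmono : ∀ i ∈ Finset.Icc 1 n, ∀ k l, 1 ≤ k → k < l → l ≤ n - 1 → ω i k < ω i l)
    (hωroot : ∀ i ∈ Finset.Icc 1 n, ∀ x : ℝ,
      deriv (Lbar n s i) x = 0 ↔ ∃ k ∈ Finset.Icc 1 (n - 1), x = ω i k)
    (i : ℕ) (hi : i ∈ Finset.Icc 1 n) (z : ℝ) :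
    deriv (Lbar n s i) z
      = (Ci n s i)⁻¹ * ((n:ℝ) * ∏ k ∈ Finset.Icc 1 (n-1), (z - ω i k)) := by
  rw [deriv_Lbar, pp_deriv_factor n hn s hpos hmono ω hωmono hωroot i hi,
    eval_mul, eval_C, eval_prod]
  simp

lemma rr_lt (n : ℕ) (s : ℕ → ℝ)
    (hpos : ∀ i ∈ Finset.Icc 1 n, 0 < s i)
    (hmono : ∀ i j, 1 ≤ i → i < j → j ≤ n → s i < s j)
    (i : ℕ) (hi : i ∈ Finset.Icc 1 n)
    (k l : ℕ) (hk : 1 ≤ k) (hkl : k < l) (hl : l ≤ n) :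
    rr s i k < rr s i l := by
  simp only [Finset.mem_Icc] at hi
  rw [rr, rr]
  rcases eq_or_ne k 1 with hk1 | hk1
  · rw [if_pos hk1, if_neg (by omega : l ≠ 1)]
    split_ifs with h
    · exact hpos (l-1) (by simp only [Finset.mem_Icc]; omega)
    · exact hpos l (by simp only [Finset.mem_Icc]; omega)
  · rw [if_neg hk1, if_neg (by omega : l ≠ 1)]
    split_ifs with h1 h2 h2
    · exact hmono (k-1) (l-1) (by omega) (by omega) (by omega)
    · exact hmono (k-1) l (by omega) (by omega) (by omega)
    · exact absurd rfl (by omega : ¬ (0:ℕ) = 0)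
    · exact hmono k l (by omega) hkl hl

lemma rr_le (n : ℕ) (s : ℕ → ℝ)
    (hpos : ∀ i ∈ Finset.Icc 1 n, 0 < s i)
    (hmono : ∀ i j, 1 ≤ i → i < j → j ≤ n → s i < s j)
    (i : ℕ) (hi : i ∈ Finset.Icc 1 n)
    (k l : ℕ) (hk : 1 ≤ k) (hkl : k ≤ l) (hl : l ≤ n) :
    rr s i k ≤ rr s i l := by
  rcases eq_or_lt_of_le hkl with rfl | h
  · exact le_refl _
  · exact le_of_lt (rr_lt n s hpos hmono i hi k l hk h hl)

lemma rr_anti (n : ℕ) (s : ℕ → ℝ)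
    (hmono : ∀ i j, 1 ≤ i → i < j → j ≤ n → s i < s j)
    (i i' : ℕ) (hii' : i ≤ i') (hi' : i' ≤ n)
    (k : ℕ) (hk : k ≤ n) : rr s i' k ≤ rr s i k := by
  rw [rr, rr]
  rcases eq_or_ne k 1 with hk1 | hk1
  · rw [if_pos hk1, if_pos hk1]
  · rw [if_neg hk1, if_neg hk1]
    by_cases h1 : k ≤ i
    · rw [if_pos h1, if_pos (le_trans h1 hii')]
    · rw [if_neg h1]
      by_cases h2 : k ≤ i'
      · rw [if_pos h2]
        exact le_of_lt (hmono (k-1) k (by omega) (by omega) hk)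
      · rw [if_neg h2]

lemma Lbar_root (n : ℕ) (s : ℕ → ℝ) (i : ℕ) (hi : i ∈ Finset.Icc 1 n)
    (k : ℕ) (hk : k ∈ Finset.Icc 1 n) : Lbar n s i (rr s i k) = 0 := by
  simp only [Finset.mem_Icc] at hi hk
  rcases eq_or_ne k 1 with rfl | hk1
  · simp [Lbar, rr]
  · by_cases hki : k ≤ i
    · have hj : k-1 ∈ (Finset.Icc 1 n).erase i := by
        simp only [Finset.mem_erase, Finset.mem_Icc]; omega
      rw [Lbar, Finset.prod_eq_zero hj
        (by rw [rr, if_neg hk1, if_pos hki, sub_self]), mul_zero, zero_div]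
    · have hj : k ∈ (Finset.Icc 1 n).erase i := by
        simp only [Finset.mem_erase, Finset.mem_Icc]; omega
      rw [Lbar, Finset.prod_eq_zero hj
        (by rw [rr, if_neg hk1, if_neg hki, sub_self]), mul_zero, zero_div]

lemma omega_mem (n : ℕ) (hn : 2 ≤ n) (s : ℕ → ℝ)
    (hpos : ∀ i ∈ Finset.Icc 1 n, 0 < s i)
    (hmono : ∀ i j, 1 ≤ i → i < j → j ≤ n → s i < s j)
    (ω : ℕ → ℕ → ℝ)
    (hωmono : ∀ i ∈ Finset.Icc 1 n, ∀ k l, 1 ≤ k → k < l → l ≤ n - 1 → ω i k < ω i l)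
    (hωroot : ∀ i ∈ Finset.Icc 1 n, ∀ x : ℝ,
      deriv (Lbar n s i) x = 0 ↔ ∃ k ∈ Finset.Icc 1 (n - 1), x = ω i k)
    (i : ℕ) (hi : i ∈ Finset.Icc 1 n) :
    ∀ k ∈ Finset.Icc 1 (n-1), rr s i k < ω i k ∧ ω i k < rr s i (k+1) := by
  have hcont : Continuous (Lbar n s i) := by
    rw [Lbar_eq]; exact Polynomial.continuous _
  have H : ∀ k', ∃ m, k' ∈ Finset.Icc 1 (n-1) →
      m ∈ Finset.Icc 1 (n-1) ∧ rr s i k' < ω i m ∧ ω i m < rr s i (k'+1) := by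
    intro k'
    by_cases hk' : k' ∈ Finset.Icc 1 (n-1)
    · have hk'' := hk'
      simp only [Finset.mem_Icc] at hk''
      have hab : rr s i k' < rr s i (k'+1) :=
        rr_lt n s hpos hmono i hi k' (k'+1) (by omega) (by omega) (by omega)
      have he : Lbar n s i (rr s i k') = Lbar n s i (rr s i (k'+1)) := by
        rw [Lbar_root n s i hi k' (by simp only [Finset.mem_Icc]; omega),
          Lbar_root n s i hi (k'+1) (by simp only [Finset.mem_Icc]; omega)]
      obtain ⟨c, hc, hdc⟩ := exists_deriv_eq_zero hab hcont.continuousOn he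
      obtain ⟨m, hm, rfl⟩ := (hωroot i hi c).mp hdc
      exact ⟨m, fun _ => ⟨hm, hc.1, hc.2⟩⟩
    · exact ⟨1, fun h => absurd h hk'⟩
  choose m hm using H
  have hmm : ∀ k1 k2, k1 ∈ Finset.Icc 1 (n-1) → k2 ∈ Finset.Icc 1 (n-1) →
      k1 < k2 → m k1 < m k2 := by
    intro k1 k2 h1 h2 hlt
    obtain ⟨hm1, ha1, hb1⟩ := hm k1 h1
    obtain ⟨hm2, ha2, hb2⟩ := hm k2 h2
    simp only [Finset.mem_Icc] at h1 h2 hm1 hm2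
    have hle : rr s i (k1+1) ≤ rr s i k2 :=
      rr_le n s hpos hmono i hi (k1+1) k2 (by omega) (by omega) (by omega)
    have hωlt : ω i (m k1) < ω i (m k2) := lt_trans hb1 (lt_of_le_of_lt hle ha2)
    by_contra hc
    push_neg at hc
    rcases eq_or_lt_of_le hc with he | hl
    · rw [he] at hωlt; exact lt_irrefl _ hωlt
    · exact absurd hωlt
        (not_lt.mpr (le_of_lt (hωmono i hi (m k2) (m k1) hm2.1 hl hm1.2)))
  have hlow : ∀ k, 1 ≤ k → k ≤ n-1 → k ≤ m k := by
    intro k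
    induction k with
    | zero => intro h _; omega
    | succ p ih =>
      intro h1 h2
      by_cases hp : p = 0
      · subst hp
        have := (hm (0+1) (by simp only [Finset.mem_Icc]; omega)).1
        simp only [Finset.mem_Icc] at this; omega
      · have hplow := ih (by omega) (by omega)
        have := hmm p (p+1) (by simp only [Finset.mem_Icc]; omega)
          (by simp only [Finset.mem_Icc]; omega) (by omega)
        omega
  have hhigh : ∀ g k, 1 ≤ k → k + g = n - 1 → m k ≤ k := by
    intro g
    induction g with
    | zero =>
      intro k h1 h2
      have := (hm k (by simp only [Finset.mem_Icc]; omega)).1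
      simp only [Finset.mem_Icc] at this; omega
    | succ p ih =>
      intro k h1 h2
      have h3 := ih (k+1) (by omega) (by omega)
      have := hmm k (k+1) (by simp only [Finset.mem_Icc]; omega)
        (by simp only [Finset.mem_Icc]; omega) (by omega)
      omega
  intro k hk
  have hkk : m k = k := by
    have hk' := hk
    simp only [Finset.mem_Icc] at hk'
    have h1 := hlow k hk'.1 hk'.2
    have h2 := hhigh (n-1-k) k hk'.1 (by omega)
    omega
  obtain ⟨_, ha, hb⟩ := hm k hk
  rw [hkk] at ha hb
  exact ⟨ha, hb⟩

lemma inv_lt_inv_pos' {a b : ℝ} (ha : 0 < a) (h : a < b) : b⁻¹ < a⁻¹ := by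
  rw [inv_lt_inv₀ (lt_trans ha h) ha]; exact h

lemma inv_lt_inv_neg' {a b : ℝ} (hb : b < 0) (h : a < b) : b⁻¹ < a⁻¹ := by
  rw [inv_lt_inv_of_neg hb (lt_trans h hb)]; exact h

theorem myDerivFinsetProd (s : Finset ℕ) (f : ℕ → ℝ[X]) :
    derivative (∏ i ∈ s, f i) = ∑ b ∈ s, (∏ a ∈ s.erase b, f a) * derivative (f b) := by
  classical
  induction s using Finset.induction_on with
  | empty => simp
  | @insert a s ha ih =>
    have key : ∀ b ∈ s, (∏ x ∈ (insert a s).erase b, f x) * derivative (f b)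
        = f a * ((∏ x ∈ s.erase b, f x) * derivative (f b)) := by
      intro b hb
      rw [Finset.erase_insert_of_ne (by rintro rfl; exact ha hb),
        Finset.prod_insert (fun h => ha (Finset.mem_of_mem_erase h)), mul_assoc]
    rw [Finset.prod_insert ha, derivative_mul, ih, Finset.sum_insert ha,
      Finset.erase_insert ha, Finset.sum_congr rfl key, ← Finset.mul_sum,
      mul_comm (derivative (f a))]

lemma eval_pp' (n : ℕ) (s : ℕ → ℝ) (i : ℕ) (z : ℝ) :
    (pp n s i).eval z = ∏ a ∈ Ei n i, (z - ss s a) := by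
  simp [pp, eval_prod]

lemma eval_derivative_pp (n : ℕ) (s : ℕ → ℝ) (i : ℕ) (z : ℝ) :
    (pp n s i).derivative.eval z
      = ∑ b ∈ Ei n i, ∏ a ∈ (Ei n i).erase b, (z - ss s a) := by
  rw [pp, myDerivFinsetProd]
  simp [eval_finset_sum, eval_prod]

lemma F_rel (n : ℕ) (s : ℕ → ℝ) (i : ℕ) (z : ℝ)
    (h : ∀ a ∈ Ei n i, z - ss s a ≠ 0) :
    (pp n s i).derivative.eval z = (pp n s i).eval z * Ff n s i z := by
  rw [eval_derivative_pp, eval_pp', Ff, Finset.mul_sum]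
  refine Finset.sum_congr rfl fun b hb => ?_
  rw [← Finset.mul_prod_erase _ _ hb, mul_comm (z - ss s b), mul_assoc,
    mul_inv_cancel₀ (h b hb), mul_one]

lemma ss_eq_rr (n : ℕ) (s : ℕ → ℝ) (i : ℕ) (hi : i ∈ Finset.Icc 1 n) :
    ∀ a ∈ Ei n i, ∃ mdx, 1 ≤ mdx ∧ mdx ≤ n ∧ ss s a = rr s i mdx := by
  intro a ha
  simp only [Finset.mem_Icc] at hi
  rw [Ei, Finset.mem_insert, Finset.mem_erase, Finset.mem_Icc] at ha
  rcases ha with rfl | ⟨hne, h1, h2⟩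
  · exact ⟨1, le_refl _, by omega, by simp [ss, rr]⟩
  · by_cases hlt : a < i
    · refine ⟨a+1, by omega, by omega, ?_⟩
      rw [ss, if_neg (by omega), rr, if_neg (by omega), if_pos (by omega)]
      simp
    · refine ⟨a, by omega, h2, ?_⟩
      rw [ss, if_neg (by omega), rr, if_neg (by omega), if_neg (by omega)]

lemma gap_sep (n : ℕ) (s : ℕ → ℝ)
    (hpos : ∀ i ∈ Finset.Icc 1 n, 0 < s i)
    (hmono : ∀ i j, 1 ≤ i → i < j → j ≤ n → s i < s j)
    (i : ℕ) (hi : i ∈ Finset.Icc 1 n)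
    (k : ℕ) (hk1 : 1 ≤ k) (hk2 : k + 1 ≤ n) :
    ∀ a ∈ Ei n i, ss s a ≤ rr s i k ∨ rr s i (k+1) ≤ ss s a := by
  intro a ha
  obtain ⟨mdx, h1, h2, heq⟩ := ss_eq_rr n s i hi a ha
  rw [heq]
  by_cases h : mdx ≤ k
  · exact Or.inl (rr_le n s hpos hmono i hi mdx k h1 h (by omega))
  · exact Or.inr (rr_le n s hpos hmono i hi (k+1) mdx (by omega) (by omega) h2)

lemma gap_avoid (n : ℕ) (s : ℕ → ℝ)
    (hpos : ∀ i ∈ Finset.Icc 1 n, 0 < s i)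
    (hmono : ∀ i j, 1 ≤ i → i < j → j ≤ n → s i < s j)
    (i : ℕ) (hi : i ∈ Finset.Icc 1 n)
    (k : ℕ) (hk1 : 1 ≤ k) (hk2 : k + 1 ≤ n) (z : ℝ)
    (hz1 : rr s i k < z) (hz2 : z < rr s i (k+1)) :
    ∀ a ∈ Ei n i, z - ss s a ≠ 0 := by
  intro a ha
  rcases gap_sep n s hpos hmono i hi k hk1 hk2 a ha with h | h
  · have : ss s a < z := lt_of_le_of_lt h hz1
    intro hc; linarith
  · have : z < ss s a := lt_of_lt_of_le hz2 h
    intro hc; linarith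

lemma F_antitone (n : ℕ) (s : ℕ → ℝ)
    (hpos : ∀ i ∈ Finset.Icc 1 n, 0 < s i)
    (hmono : ∀ i j, 1 ≤ i → i < j → j ≤ n → s i < s j)
    (i : ℕ) (hi : i ∈ Finset.Icc 1 n)
    (k : ℕ) (hk1 : 1 ≤ k) (hk2 : k + 1 ≤ n) (x y : ℝ)
    (hx1 : rr s i k < x) (hy2 : y < rr s i (k+1)) (hxy : x < y) :
    Ff n s i y < Ff n s i x := by
  rw [Ff, Ff]
  refine Finset.sum_lt_sum_of_nonempty ⟨0, by simp [Ei]⟩ fun a ha => ?_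
  rcases gap_sep n s hpos hmono i hi k hk1 hk2 a ha with h | h
  · have h1 : 0 < x - ss s a := by linarith
    exact inv_lt_inv_pos' h1 (by linarith)
  · have h1 : y - ss s a < 0 := by linarith
    exact inv_lt_inv_neg' h1 (by linarith)

lemma Ff_diff (n : ℕ) (s : ℕ → ℝ) (i i' : ℕ)
    (hi : i ∈ Finset.Icc 1 n) (hi' : i' ∈ Finset.Icc 1 n) (hii' : i ≠ i') (z : ℝ) :
    Ff n s i z = Ff n s i' z + ((z - s i')⁻¹ - (z - s i)⁻¹) := by
  simp only [Finset.mem_Icc] at hi hi'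
  have hi'mem : i' ∈ (Finset.Icc 1 n).erase i := by
    simp only [Finset.mem_erase, Finset.mem_Icc]; omega
  have himem : i ∈ (Finset.Icc 1 n).erase i' := by
    simp only [Finset.mem_erase, Finset.mem_Icc]; omega
  have e1 : Ei n i = insert i' (insert 0 (((Finset.Icc 1 n).erase i).erase i')) := by
    rw [Ei, Finset.insert_comm, Finset.insert_erase hi'mem]
  have e2 : Ei n i' = insert i (insert 0 (((Finset.Icc 1 n).erase i).erase i')) := by
    rw [Ei, Finset.insert_comm, Finset.erase_right_comm, Finset.insert_erase himem]
  have hni' : i' ∉ insert 0 (((Finset.Icc 1 n).erase i).erase i') := by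
    intro hmem
    rcases Finset.mem_insert.mp hmem with h | h
    · omega
    · exact Finset.notMem_erase _ _ h
  have hni : i ∉ insert 0 (((Finset.Icc 1 n).erase i).erase i') := by
    intro hmem
    rcases Finset.mem_insert.mp hmem with h | h
    · omega
    · exact Finset.notMem_erase _ _ (Finset.mem_of_mem_erase h)
  rw [Ff, Ff, e1, e2, Finset.sum_insert hni', Finset.sum_insert hni]
  rw [ss, if_neg (by omega : ¬ i' = 0), ss, if_neg (by omega : ¬ i = 0)]
  ring

lemma Ff_zero_of_deriv (n : ℕ) (s : ℕ → ℝ)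
    (hpos : ∀ i ∈ Finset.Icc 1 n, 0 < s i)
    (hmono : ∀ i j, 1 ≤ i → i < j → j ≤ n → s i < s j)
    (i : ℕ) (hi : i ∈ Finset.Icc 1 n) (z : ℝ)
    (havoid : ∀ a ∈ Ei n i, z - ss s a ≠ 0)
    (hd : deriv (Lbar n s i) z = 0) : Ff n s i z = 0 := by
  rw [deriv_Lbar, F_rel n s i z havoid] at hd
  have h1 : (Ci n s i)⁻¹ ≠ 0 := inv_ne_zero (Ci_ne n s hpos hmono i hi)
  have h2 : (pp n s i).eval z ≠ 0 := by
    rw [eval_pp']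
    exact Finset.prod_ne_zero_iff.mpr havoid
  rcases mul_eq_zero.mp hd with h | h
  · exact absurd h h1
  rcases mul_eq_zero.mp h with h | h
  · exact absurd h h2
  · exact h

lemma omega_anti (n : ℕ) (hn : 2 ≤ n) (s : ℕ → ℝ)
    (hpos : ∀ i ∈ Finset.Icc 1 n, 0 < s i)
    (hmono : ∀ i j, 1 ≤ i → i < j → j ≤ n → s i < s j)
    (ω : ℕ → ℕ → ℝ)
    (hωmono : ∀ i ∈ Finset.Icc 1 n, ∀ k l, 1 ≤ k → k < l → l ≤ n - 1 → ω i k < ω i l)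
    (hωroot : ∀ i ∈ Finset.Icc 1 n, ∀ x : ℝ,
      deriv (Lbar n s i) x = 0 ↔ ∃ k ∈ Finset.Icc 1 (n - 1), x = ω i k)
    (i i' : ℕ) (hi : i ∈ Finset.Icc 1 n) (hi' : i' ∈ Finset.Icc 1 n) (hii' : i < i')
    (k : ℕ) (hk : k ∈ Finset.Icc 1 (n-1)) : ω i' k < ω i k := by
  obtain ⟨hb1, hb2⟩ := omega_mem n hn s hpos hmono ω hωmono hωroot i hi k hk
  obtain ⟨ha1, ha2⟩ := omega_mem n hn s hpos hmono ω hωmono hωroot i' hi' k hk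
  have hiN := hi; have hi'N := hi'; have hkN := hk
  simp only [Finset.mem_Icc] at hiN hi'N hkN
  set a := ω i' k with hadef
  set b := ω i k with hbdef
  rcases le_or_gt a (rr s i k) with h | har
  · exact lt_of_le_of_lt h hb1
  rcases le_or_gt (rr s i' (k+1)) b with h | hbr
  · exact lt_of_lt_of_le ha2 h
  have hrle2 : rr s i' (k+1) ≤ rr s i (k+1) :=
    rr_anti n s hmono i i' (le_of_lt hii') (by omega) (k+1) (by omega)
  have hrle1 : rr s i' k ≤ rr s i k :=
    rr_anti n s hmono i i' (le_of_lt hii') (by omega) k (by omega)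
  -- a is in the gap of T_i, b is in the gap of T_{i'} as well
  have haI2 : a < rr s i (k+1) := lt_of_lt_of_le ha2 hrle2
  have hbI1 : rr s i' k < b := lt_of_le_of_lt hrle1 hb1
  -- F values are zero
  have hFb : Ff n s i b = 0 := by
    refine Ff_zero_of_deriv n s hpos hmono i hi b
      (gap_avoid n s hpos hmono i hi k (by omega) (by omega) b hb1 hb2) ?_
    exact (hωroot i hi b).mpr ⟨k, hk, rfl⟩
  have hFa' : Ff n s i' a = 0 := by
    refine Ff_zero_of_deriv n s hpos hmono i' hi' a
      (gap_avoid n s hpos hmono i' hi' k (by omega) (by omega) a ha1 ha2) ?_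
    exact (hωroot i' hi' a).mpr ⟨k, hk, rfl⟩
  -- positivity of F_i at a
  have hkey : 0 < Ff n s i a := by
    rw [Ff_diff n s i i' hi hi' (by omega) a, hFa', zero_add]
    by_cases hc1 : k ≤ i
    · -- a < s k ≤ s i < s i'
      have hsk : rr s i' (k+1) = s k := by
        rw [rr, if_neg (by omega), if_pos (by omega)]
        simp
      have hask : a < s k := by rw [← hsk]; exact ha2
      have haski : a < s i := by
        rcases eq_or_lt_of_le hc1 with rfl | h
        · exact hask
        · exact lt_trans hask (hmono k i (by omega) h (by omega))
      have haski' : a < s i' := lt_trans haski (hmono i i' (by omega) hii' (by omega))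
      have h1 : a - s i < 0 := by linarith
      have h2 : a - s i' < a - s i := by
        have := hmono i i' (by omega) hii' (by omega); linarith
      have := inv_lt_inv_neg' h1 h2
      linarith
    · by_cases hc2 : k < i'
      · -- contradiction: rr i k = s k and rr i' (k+1) = s k
        exfalso
        have h1 : rr s i k = s k := by
          rw [rr, if_neg (by omega), if_neg (by omega)]
        have h2 : rr s i' (k+1) = s k := by
          rw [rr, if_neg (by omega), if_pos (by omega)]
          simp
        rw [h1] at har
        rw [h2] at ha2
        linarith
      · -- k ≥ i' : s i < s i' ≤ s k < a
        have h1 : rr s i k = s k := by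
          rw [rr, if_neg (by omega), if_neg (by omega)]
        have hask : s k < a := by rw [← h1]; exact har
        have haski' : s i' < a := by
          rcases eq_or_lt_of_le (by omega : i' ≤ k) with rfl | h
          · exact hask
          · exact lt_trans (hmono i' k (by omega) h (by omega)) hask
        have haski : s i < a :=
          lt_trans (hmono i i' (by omega) hii' (by omega)) haski'
        have h2 : 0 < a - s i' := by linarith
        have h3 : a - s i' < a - s i := by
          have := hmono i i' (by omega) hii' (by omega); linarith
        have := inv_lt_inv_pos' h2 h3
        linarith
  -- conclude
  by_contra hcon
  push_neg at hcon
  rcases eq_or_lt_of_le hcon with heq | hlt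
  · rw [heq] at hFb
    rw [hFb] at hkey
    exact lt_irrefl 0 hkey
  · have := F_antitone n s hpos hmono i hi k (by omega) (by omega) b a hb1 haI2 hlt
    rw [hFb] at this
    linarith

end S11

/-- For `n ≥ 2`, nodes `0 < s_1 < ⋯ < s_n`, roots `ω_{i,1} < ⋯ < ω_{i,n−1}` of `L̄_i′`,
and intervals `A_j = (ω_{1,j−1}, ω_{n,j})` (with `ω_{1,0} = −∞`, `ω_{n,n} = +∞`):
for every `j ∈ {1, …, n}` and every `z ∈ A_j` one has
`(−1)^{n+j} (−1)^{n−i} L̄_i′(z) > 0` for all `i ∈ {1, …, n}`; in particular all the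
quantities `(−1)^{n−i} L̄_i′(z)` are nonzero with common sign `(−1)^{n+j}`. -/
theorem stmt_11 (n : ℕ) (hn : 2 ≤ n) (s : ℕ → ℝ)
    (hpos : ∀ i ∈ Finset.Icc 1 n, 0 < s i)
    (hmono : ∀ i j, 1 ≤ i → i < j → j ≤ n → s i < s j)
    (ω : ℕ → ℕ → ℝ)
    (hωmono : ∀ i ∈ Finset.Icc 1 n, ∀ k l, 1 ≤ k → k < l → l ≤ n - 1 → ω i k < ω i l)
    (hωroot : ∀ i ∈ Finset.Icc 1 n, ∀ x : ℝ,
      deriv (Lbar n s i) x = 0 ↔ ∃ k ∈ Finset.Icc 1 (n - 1), x = ω i k) :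
    ∀ j ∈ Finset.Icc 1 n, ∀ z : ℝ,
      (1 < j → ω 1 (j - 1) < z) → (j < n → z < ω n j) →
      ∀ i ∈ Finset.Icc 1 n,
        0 < (-1 : ℝ) ^ (n + j) * ((-1 : ℝ) ^ (n - i) * deriv (Lbar n s i) z) := by
  intro j hj z hz1 hz2 i hi
  have hjN := hj; have hiN := hi
  simp only [Finset.mem_Icc] at hjN hiN
  have hlt : ∀ k ∈ Finset.Icc 1 (n-1), k ≤ j-1 → ω i k < z := by
    intro k hk hkj
    have hkN := hk; simp only [Finset.mem_Icc] at hkN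
    have h1 : ω i k ≤ ω i (j-1) := by
      rcases eq_or_lt_of_le hkj with rfl | h
      · exact le_refl _
      · exact le_of_lt (hωmono i hi k (j-1) (by omega) h (by omega))
    have h2 : ω i (j-1) ≤ ω 1 (j-1) := by
      rcases eq_or_lt_of_le (by omega : 1 ≤ i) with heq | h
      · rw [← heq]
      · exact le_of_lt (S11.omega_anti n hn s hpos hmono ω hωmono hωroot 1 i
          (by simp only [Finset.mem_Icc]; omega) hi h (j-1)
          (by simp only [Finset.mem_Icc]; omega))
    exact lt_of_le_of_lt (le_trans h1 h2) (hz1 (by omega))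
  have hgt : ∀ k ∈ Finset.Icc 1 (n-1), j ≤ k → z < ω i k := by
    intro k hk hkj
    have hkN := hk; simp only [Finset.mem_Icc] at hkN
    have h0 : z < ω n j := hz2 (by omega)
    have h1 : ω n j ≤ ω i j := by
      rcases eq_or_lt_of_le (by omega : i ≤ n) with heq | h
      · rw [heq]
      · exact le_of_lt (S11.omega_anti n hn s hpos hmono ω hωmono hωroot i n hi
          (by simp only [Finset.mem_Icc]; omega) h j
          (by simp only [Finset.mem_Icc]; omega))
    have h2 : ω i j ≤ ω i k := by
      rcases eq_or_lt_of_le hkj with rfl | h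
      · exact le_refl _
      · exact le_of_lt (hωmono i hi j k (by omega) h (by omega))
    linarith
  rw [S11.deriv_Lbar_eq n hn s hpos hmono ω hωmono hωroot i hi z]
  have hsplit : Finset.Icc 1 (n-1) = Finset.Icc 1 (j-1) ∪ Finset.Icc j (n-1) := by
    ext a; simp only [Finset.mem_union, Finset.mem_Icc]; omega
  have hdisj : Disjoint (Finset.Icc 1 (j-1)) (Finset.Icc j (n-1)) := by
    rw [Finset.disjoint_left]; intro a h1 h2
    simp only [Finset.mem_Icc] at h1 h2; omega
  have hP1 : 0 < ∏ k ∈ Finset.Icc 1 (j-1), (z - ω i k) := by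
    refine Finset.prod_pos fun k hk => ?_
    have hkN := hk; simp only [Finset.mem_Icc] at hkN
    have := hlt k (by simp only [Finset.mem_Icc]; omega) (by omega)
    linarith
  have hP2 : 0 < (-1:ℝ)^(n-j) * ∏ k ∈ Finset.Icc j (n-1), (z - ω i k) := by
    have hcard : (Finset.Icc j (n-1)).card = n - j := by rw [Nat.card_Icc]; omega
    rw [← hcard]
    refine S11.prod_neg_sign _ _ fun k hk => ?_
    have hkN := hk; simp only [Finset.mem_Icc] at hkN
    have := hgt k (by simp only [Finset.mem_Icc]; omega) (by omega)
    linarith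
  have hC := S11.Ci_sign n s hpos hmono i hi
  have hCinv : 0 < (-1:ℝ)^(n-i) * (S11.Ci n s i)⁻¹ := by
    have h1 : ((-1:ℝ)^(n-i) * S11.Ci n s i)⁻¹ = (-1:ℝ)^(n-i) * (S11.Ci n s i)⁻¹ := by
      rw [mul_inv]
      congr 1
      rcases Nat.even_or_odd (n-i) with h | h
      · rw [h.neg_one_pow]; norm_num
      · rw [h.neg_one_pow]; norm_num
    rw [← h1]; exact inv_pos.mpr hC
  have hnpos : (0:ℝ) < (n:ℝ) := by exact_mod_cast (by omega : 0 < n)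
  have hparity : (-1:ℝ)^(n+j) = (-1)^(n-j) := by
    have he : n + j = (n - j) + 2*j := by omega
    rw [he, pow_add]
    have h2 : ((-1:ℝ))^(2*j) = 1 := by rw [pow_mul]; norm_num
    rw [h2, mul_one]
  rw [hsplit, Finset.prod_union hdisj, hparity]
  have hring : (-1:ℝ)^(n-j) * ((-1:ℝ)^(n-i) * ((S11.Ci n s i)⁻¹ *
        ((n:ℝ) * ((∏ k ∈ Finset.Icc 1 (j-1), (z - ω i k)) *
          (∏ k ∈ Finset.Icc j (n-1), (z - ω i k))))))
      = ((((-1:ℝ)^(n-i) * (S11.Ci n s i)⁻¹) * (n:ℝ)) *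
          (∏ k ∈ Finset.Icc 1 (j-1), (z - ω i k))) *
        ((-1:ℝ)^(n-j) * (∏ k ∈ Finset.Icc j (n-1), (z - ω i k))) := by
    ring
  rw [hring]
  exact mul_pos (mul_pos (mul_pos hCinv hnpos) hP1) hP2
end

section
/- Let n ≥ 2 and let 0 < s_1 < s_2 < ⋯ < s_n be real numbers. For each i let ω_{i,1} < ⋯ < ω_{i,n−1} denote the n−1 distinct real roots of L̄_i′, and set A_j = (ω_{1,j−1}, ω_{n,j}) for j = 1,…,n with ω_{1,0} = −∞, ω_{n,n} = +∞. Then for a real number z, the n numbers (−1)^{n−i}·L̄_i′(z), i = 1,…,n, are all nonzero and all of the same sign if and only if z ∈ ⋃_{j=1}^n A_j. -/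
open Finset

open Polynomial

/-- Sign of a product of nonzero reals via parity of the number of negative factors. -/
lemma prod_pos_iff_even (t : Finset ℕ) (f : ℕ → ℝ) (hf : ∀ k ∈ t, f k ≠ 0) :
    (0 < ∏ k ∈ t, f k ↔ Even (t.filter (fun k => f k < 0)).card) := by
  classical
  induction t using Finset.induction_on with
  | empty => simp
  | @insert a t ha ih =>
    have hfa : f a ≠ 0 := hf a (mem_insert_self a t)
    have hrest : ∀ k ∈ t, f k ≠ 0 := fun k hk => hf k (mem_insert_of_mem hk)
    have hne : (∏ k ∈ t, f k) ≠ 0 := Finset.prod_ne_zero_iff.2 hrest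
    rw [Finset.prod_insert ha, Finset.filter_insert]
    rcases lt_or_gt_of_ne hfa with hneg | hpos
    · rw [if_pos hneg, Finset.card_insert_of_notMem (fun h => ha (mem_of_mem_filter a h))]
      rw [Nat.even_add_one, ← ih hrest]
      constructor
      · intro h hpos'
        nlinarith
      · intro h
        rcases hne.lt_or_gt with h' | h'
        · nlinarith
        · exact absurd h' h
    · rw [if_neg (by linarith), ← ih hrest]
      constructor
      · intro h
        nlinarith
      · intro h; positivity

/-- A downward-closed subset of `Icc 1 N` is an initial segment: membership iff `k ≤ card`. -/
lemma dc_mem_iff (N : ℕ) (T : Finset ℕ) (hsub : T ⊆ Finset.Icc 1 N)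
    (hdc : ∀ k ∈ T, ∀ l, 1 ≤ l → l ≤ k → l ∈ T) :
    ∀ k, 1 ≤ k → k ≤ N → (k ∈ T ↔ k ≤ T.card) := by
  intro k hk1 hkN
  constructor
  · intro hkT
    have : Finset.Icc 1 k ⊆ T := by
      intro l hl
      rw [Finset.mem_Icc] at hl
      exact hdc k hkT l hl.1 hl.2
    calc k = (Finset.Icc 1 k).card := by rw [Nat.card_Icc]; omega
    _ ≤ T.card := Finset.card_le_card this
  · intro hcard
    by_contra hkT
    have hTsub : T ⊆ Finset.Icc 1 (k-1) := by
      intro l hl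
      have hl' := Finset.mem_Icc.1 (hsub hl)
      rw [Finset.mem_Icc]
      refine ⟨hl'.1, ?_⟩
      by_contra hlk
      exact hkT (hdc l hl k hk1 (by omega))
    have := Finset.card_le_card hTsub
    rw [Nat.card_Icc] at this
    omega

/-- A monotone ℕ-valued function on `[1,N]` bounded by `N` matching parity of `k` equals `k`. -/
lemma mono_parity_eq (N : ℕ) (b : ℕ → ℕ)
    (hmono : ∀ k l, 1 ≤ k → k ≤ l → l ≤ N → b k ≤ b l)
    (hbd : ∀ k, 1 ≤ k → k ≤ N → b k ≤ N)
    (hpar : ∀ k, 1 ≤ k → k ≤ N → b k % 2 = k % 2) :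
    ∀ k, 1 ≤ k → k ≤ N → b k = k := by
  have hlow : ∀ k, 1 ≤ k → k ≤ N → k ≤ b k := by
    intro k
    induction k with
    | zero => omega
    | succ m ih =>
      intro h1 hN
      by_cases h : m = 0
      · subst h
        have := hpar 1 le_rfl (by omega)
        show 1 ≤ b 1
        omega
      · have hm1 : 1 ≤ m := by omega
        have hmN : m ≤ N := by omega
        have hmb := ih hm1 hmN
        have hmono' := hmono m (m+1) hm1 (by omega) hN
        have hp1 := hpar m hm1 hmN
        have hp2 := hpar (m+1) (by omega) hN
        omega
  have hhigh : ∀ d k, k = N - d → 1 ≤ k → k ≤ N → b k ≤ k := by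
    intro d
    induction d with
    | zero =>
      intro k hk h1 hN
      have := hbd k h1 hN
      omega
    | succ m ih =>
      intro k hk h1 hN
      by_cases hkN : k = N
      · have := hbd k h1 hN; omega
      · have hk1N : k + 1 ≤ N := by omega
        have := ih (k+1) (by omega) (by omega) hk1N
        have := hmono k (k+1) h1 (by omega) hk1N
        have hp1 := hpar k h1 hN
        have hp2 := hpar (k+1) (by omega) hk1N
        omega
  intro k h1 hN
  have := hlow k h1 hN
  have := hhigh (N - k) k (by omega) h1 hN
  omega


noncomputable def Qp (n : ℕ) (s : ℕ → ℝ) (i : ℕ) : Polynomial ℝ :=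
  X * ∏ j ∈ (Finset.Icc 1 n).erase i, (X - C (s j))

noncomputable def cst (n : ℕ) (s : ℕ → ℝ) (i : ℕ) : ℝ :=
  s i * ∏ j ∈ (Finset.Icc 1 n).erase i, (s i - s j)

lemma Qp_eval (n : ℕ) (s : ℕ → ℝ) (i : ℕ) (z : ℝ) :
    (Qp n s i).eval z = z * ∏ j ∈ (Finset.Icc 1 n).erase i, (z - s j) := by
  simp [Qp, eval_prod]

lemma deriv_Lbar (n : ℕ) (s : ℕ → ℝ) (i : ℕ) (z : ℝ) :
    deriv (Lbar n s i) z = (Qp n s i).derivative.eval z / cst n s i := by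
  have h : Lbar n s i = fun z => (Qp n s i).eval z / cst n s i := by
    funext w
    rw [Qp_eval]
    rfl
  rw [h, deriv_div_const, Polynomial.deriv]

section main
variable {n : ℕ} {s : ℕ → ℝ}

lemma s_ne {i j : ℕ} (hmono : ∀ i j, 1 ≤ i → i < j → j ≤ n → s i < s j)
    (hi : i ∈ Finset.Icc 1 n) (hj : j ∈ Finset.Icc 1 n) (hij : i ≠ j) : s i ≠ s j := by
  rw [Finset.mem_Icc] at hi hj
  rcases Nat.lt_or_ge i j with h | h
  · exact ne_of_lt (hmono i j hi.1 h hj.2)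
  · exact (ne_of_lt (hmono j i hj.1 (by omega) hi.2)).symm

lemma cst_sign (hpos : ∀ i ∈ Finset.Icc 1 n, 0 < s i)
    (hmono : ∀ i j, 1 ≤ i → i < j → j ≤ n → s i < s j)
    {i : ℕ} (hi : i ∈ Finset.Icc 1 n) :
    0 < (-1 : ℝ) ^ (n - i) * cst n s i := by
  rw [Finset.mem_Icc] at hi
  have hsplit : (Finset.Icc 1 n).erase i = Finset.Icc 1 (i-1) ∪ Finset.Icc (i+1) n := by
    ext j; simp only [Finset.mem_erase, Finset.mem_Icc, Finset.mem_union]; omega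
  have hdisj : Disjoint (Finset.Icc 1 (i-1)) (Finset.Icc (i+1) n) := by
    rw [Finset.disjoint_left]; intro j h1 h2
    rw [Finset.mem_Icc] at h1 h2; omega
  have hprod : ∏ j ∈ (Finset.Icc 1 n).erase i, (s i - s j) =
      (∏ j ∈ Finset.Icc 1 (i-1), (s i - s j)) * ∏ j ∈ Finset.Icc (i+1) n, (s i - s j) := by
    rw [hsplit, Finset.prod_union hdisj]
  have hlow : 0 < ∏ j ∈ Finset.Icc 1 (i-1), (s i - s j) := by
    apply Finset.prod_pos
    intro j hj
    rw [Finset.mem_Icc] at hj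
    have := hmono j i hj.1 (by omega) hi.2
    linarith
  have hhigh : ∏ j ∈ Finset.Icc (i+1) n, (s i - s j) =
      (-1 : ℝ) ^ (n - i) * ∏ j ∈ Finset.Icc (i+1) n, (s j - s i) := by
    have : ∀ j ∈ Finset.Icc (i+1) n, (s i - s j) = (-1) * (s j - s i) := by
      intro j _; ring
    rw [Finset.prod_congr rfl this, Finset.prod_mul_distrib, Finset.prod_const,
      Nat.card_Icc]
    congr 2
    omega
  have hhighpos : 0 < ∏ j ∈ Finset.Icc (i+1) n, (s j - s i) := by
    apply Finset.prod_pos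
    intro j hj
    rw [Finset.mem_Icc] at hj
    have := hmono i j hi.1 (by omega) hj.2
    linarith
  have hsi : 0 < s i := hpos i (Finset.mem_Icc.2 hi)
  have hsq : (-1 : ℝ) ^ (n - i) * (-1 : ℝ) ^ (n - i) = 1 := by
    rw [← pow_add]
    exact Even.neg_one_pow ⟨n - i, rfl⟩
  unfold cst
  rw [hprod, hhigh]
  calc (0:ℝ) < s i * ((∏ j ∈ Finset.Icc 1 (i-1), (s i - s j)) *
        ∏ j ∈ Finset.Icc (i+1) n, (s j - s i)) := by positivity
  _ = (-1 : ℝ) ^ (n - i) * (s i * ((∏ j ∈ Finset.Icc 1 (i-1), (s i - s j)) *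
        ((-1 : ℝ) ^ (n - i) * ∏ j ∈ Finset.Icc (i+1) n, (s j - s i)))) := by
      linear_combination (-(s i * ((∏ j ∈ Finset.Icc 1 (i-1), (s i - s j)) *
        ∏ j ∈ Finset.Icc (i+1) n, (s j - s i)))) * hsq
  _ = _ := by ring

end main

section factor
variable {n : ℕ} {s : ℕ → ℝ}

lemma Qp_monic (n : ℕ) (s : ℕ → ℝ) (i : ℕ) : (Qp n s i).Monic :=
  monic_X.mul (monic_prod_of_monic _ _ fun _ _ => monic_X_sub_C _)

lemma Qp_natDegree {i : ℕ} (hi : i ∈ Finset.Icc 1 n) : (Qp n s i).natDegree = n := by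
  rw [Finset.mem_Icc] at hi
  have hcard : ((Finset.Icc 1 n).erase i).card = n - 1 := by
    rw [Finset.card_erase_of_mem (Finset.mem_Icc.2 hi), Nat.card_Icc]
    omega
  have h1 : (∏ j ∈ (Finset.Icc 1 n).erase i, (X - C (s j)) : Polynomial ℝ).natDegree
      = n - 1 := by
    rw [Polynomial.natDegree_prod _ _ (fun j _ => X_sub_C_ne_zero (s j))]
    simp [natDegree_X_sub_C, hcard]
  unfold Qp
  rw [Polynomial.natDegree_mul X_ne_zero
    (Finset.prod_ne_zero_iff.2 fun j _ => X_sub_C_ne_zero (s j)), natDegree_X, h1]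
  omega

lemma Qp_deriv_coeff (hn : 2 ≤ n) {i : ℕ} (hi : i ∈ Finset.Icc 1 n) :
    (Qp n s i).derivative.coeff (n - 1) = (n : ℝ) := by
  have h1 : (Qp n s i).coeff n = 1 := by
    have := (Qp_monic n s i).coeff_natDegree
    rwa [Qp_natDegree hi] at this
  rw [coeff_derivative, show n - 1 + 1 = n from by omega, h1, one_mul]
  rw [Nat.cast_sub (show 1 ≤ n from by omega)]
  push_cast
  ring

lemma Qp_derivative_factor (hn : 2 ≤ n) {i : ℕ} (hi : i ∈ Finset.Icc 1 n) (ω : ℕ → ℝ)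
    (hroots : ∀ k ∈ Finset.Icc 1 (n-1), (Qp n s i).derivative.eval (ω k) = 0)
    (hinj : ∀ k ∈ Finset.Icc 1 (n-1), ∀ l ∈ Finset.Icc 1 (n-1), k ≠ l → ω k ≠ ω l) :
    (Qp n s i).derivative = C (n : ℝ) * ∏ k ∈ Finset.Icc 1 (n-1), (X - C (ω k)) := by
  set P : Polynomial ℝ := ∏ k ∈ Finset.Icc 1 (n-1), (X - C (ω k)) with hP
  have hPmonic : P.Monic := monic_prod_of_monic _ _ fun _ _ => monic_X_sub_C _
  have hPdeg : P.natDegree = n - 1 := by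
    rw [hP, Polynomial.natDegree_prod _ _ (fun k _ => X_sub_C_ne_zero (ω k))]
    simp [natDegree_X_sub_C, Nat.card_Icc]
  have hQne : (Qp n s i).derivative ≠ 0 := by
    intro h
    have h2 := Qp_deriv_coeff hn hi (s := s)
    rw [h, Polynomial.coeff_zero] at h2
    have : (n:ℕ) = 0 := by exact_mod_cast h2.symm
    omega
  have hdvd : P ∣ (Qp n s i).derivative := by
    apply Finset.prod_dvd_of_coprime
    · intro k hk l hl hkl
      exact isCoprime_X_sub_C_of_isUnit_sub (IsUnit.mk0 _ (sub_ne_zero.2 (hinj k hk l hl hkl)))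
    · intro k hk
      rw [dvd_iff_isRoot]
      exact hroots k hk
  obtain ⟨u, hu⟩ := hdvd
  have hune : u ≠ 0 := by
    intro h; rw [h, mul_zero] at hu; exact hQne hu
  have hudeg : u.natDegree = 0 := by
    have h1 : (Qp n s i).derivative.natDegree ≤ n - 1 := by
      have := Polynomial.natDegree_derivative_le (Qp n s i)
      rwa [Qp_natDegree hi] at this
    rw [hu, Polynomial.natDegree_mul hPmonic.ne_zero hune, hPdeg] at h1
    omega
  obtain ⟨c, rfl⟩ := Polynomial.natDegree_eq_zero.1 hudeg
  have hc : c = (n : ℝ) := by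
    have h2 := Qp_deriv_coeff hn hi (s := s)
    rw [hu, Polynomial.coeff_mul_C, ← hPdeg, hPmonic.coeff_natDegree, one_mul] at h2
    exact h2
  rw [hu, hc, mul_comm]

end factor

section base
variable {n : ℕ} {s : ℕ → ℝ}

lemma cst_ne (hpos : ∀ i ∈ Finset.Icc 1 n, 0 < s i)
    (hmono : ∀ i j, 1 ≤ i → i < j → j ≤ n → s i < s j)
    {i : ℕ} (hi : i ∈ Finset.Icc 1 n) : cst n s i ≠ 0 := by
  intro h
  have := cst_sign hpos hmono hi
  rw [h, mul_zero] at this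
  exact lt_irrefl _ this

/-- If `Q_i` and `Q_i'` had a common root, contradiction; more precisely `Q_i'` does not
vanish at the roots of `Q_i`. -/
lemma Qp_deriv_ne_at_root (hpos : ∀ i ∈ Finset.Icc 1 n, 0 < s i)
    (hmono : ∀ i j, 1 ≤ i → i < j → j ≤ n → s i < s j)
    {i : ℕ} (hi : i ∈ Finset.Icc 1 n) {ρ : ℝ}
    (hρ : ρ = 0 ∨ ∃ j ∈ (Finset.Icc 1 n).erase i, ρ = s j) :
    (Qp n s i).derivative.eval ρ ≠ 0 := by
  rcases hρ with rfl | ⟨j₀, hj₀, rfl⟩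
  · have : (Qp n s i).derivative.eval 0 =
        ∏ j ∈ (Finset.Icc 1 n).erase i, (0 - s j) := by
      unfold Qp
      rw [derivative_mul, derivative_X]
      simp [eval_prod]
    rw [this]
    apply Finset.prod_ne_zero_iff.2
    intro j hj
    have := hpos j (Finset.mem_of_mem_erase hj)
    intro h
    linarith
  · have hsplit : Qp n s i = (X - C (s j₀)) *
        (X * ∏ j ∈ ((Finset.Icc 1 n).erase i).erase j₀, (X - C (s j))) := by
      unfold Qp
      rw [← Finset.mul_prod_erase _ _ hj₀]
      ring
    have heval : (Qp n s i).derivative.eval (s j₀) =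
        s j₀ * ∏ j ∈ ((Finset.Icc 1 n).erase i).erase j₀, (s j₀ - s j) := by
      rw [hsplit, derivative_mul]
      simp [eval_prod]
    rw [heval]
    have hj₀' : j₀ ∈ Finset.Icc 1 n := Finset.mem_of_mem_erase hj₀
    have h0 : 0 < s j₀ := hpos j₀ hj₀'
    apply mul_ne_zero (ne_of_gt h0)
    apply Finset.prod_ne_zero_iff.2
    intro j hj
    have hj' : j ∈ Finset.Icc 1 n := Finset.mem_of_mem_erase (Finset.mem_of_mem_erase hj)
    have hne : s j₀ ≠ s j := s_ne hmono hj₀' hj' (Finset.ne_of_mem_erase hj).symm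
    exact sub_ne_zero.2 hne

/-- Base interlacing data for the critical points of `Q_i`. -/
lemma base_interlace (hn : 2 ≤ n)
    (hpos : ∀ i ∈ Finset.Icc 1 n, 0 < s i)
    (hmono : ∀ i j, 1 ≤ i → i < j → j ≤ n → s i < s j)
    {i : ℕ} (hi : i ∈ Finset.Icc 1 n) (ω : ℕ → ℝ)
    (hzero : ∀ x : ℝ, (Qp n s i).derivative.eval x = 0 ↔ ∃ k ∈ Finset.Icc 1 (n-1), x = ω k)
    (hωm : ∀ k l, 1 ≤ k → k < l → l ≤ n-1 → ω k < ω l) :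
    ∀ k ∈ Finset.Icc 1 (n-1), 0 < ω k ∧ (∀ j ∈ (Finset.Icc 1 n).erase i, ω k ≠ s j) ∧
      (((Finset.Icc 1 n).erase i).filter (fun j => ω k < s j)).card = n - k := by
  classical
  set E := (Finset.Icc 1 n).erase i with hE
  have hEcard : E.card = n - 1 := by
    rw [hE, Finset.card_erase_of_mem hi, Nat.card_Icc]; omega
  have hsinj : Set.InjOn s E := by
    intro a ha b hb hab
    by_contra hne
    exact s_ne hmono (Finset.mem_of_mem_erase ha) (Finset.mem_of_mem_erase hb) hne hab
  set R : Finset ℝ := insert (0:ℝ) (E.image s) with hR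
  have h0img : (0:ℝ) ∉ E.image s := by
    rw [Finset.mem_image]
    rintro ⟨j, hj, hj0⟩
    have := hpos j (Finset.mem_of_mem_erase hj)
    linarith
  have hRcard : R.card = n := by
    rw [hR, Finset.card_insert_of_notMem h0img, Finset.card_image_of_injOn hsinj, hEcard]
    omega
  have hRmem : ∀ ρ ∈ R, ρ = 0 ∨ ∃ j ∈ E, ρ = s j := by
    intro ρ hρ
    rw [hR, Finset.mem_insert, Finset.mem_image] at hρ
    rcases hρ with h | ⟨j, hj, hj'⟩
    · exact Or.inl h
    · exact Or.inr ⟨j, hj, hj'.symm⟩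
  have hRnonneg : ∀ ρ ∈ R, 0 ≤ ρ := by
    intro ρ hρ
    rcases hRmem ρ hρ with rfl | ⟨j, hj, rfl⟩
    · exact le_refl 0
    · exact le_of_lt (hpos j (Finset.mem_of_mem_erase hj))
  have hRroot : ∀ ρ ∈ R, (Qp n s i).eval ρ = 0 := by
    intro ρ hρ
    rw [Qp_eval]
    rcases hRmem ρ hρ with rfl | ⟨j, hj, rfl⟩
    · ring
    · rw [Finset.prod_eq_zero hj (by ring)]
      ring
  have hRnotω : ∀ ρ ∈ R, ∀ k ∈ Finset.Icc 1 (n-1), ρ ≠ ω k := by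
    intro ρ hρ k hk h
    apply Qp_deriv_ne_at_root hpos hmono hi (hRmem ρ hρ)
    rw [hzero]
    exact ⟨k, hk, h⟩
  set κ : ℝ → ℕ := fun ρ => ((Finset.Icc 1 (n-1)).filter (fun k => ω k < ρ)).card with hκ
  have hκlt : ∀ ρ ρ', ρ ∈ R → ρ' ∈ R → ρ < ρ' → κ ρ < κ ρ' := by
    intro ρ ρ' hρ hρ' hlt
    obtain ⟨c, hc, hc0⟩ := exists_deriv_eq_zero (f := fun x => (Qp n s i).eval x) hlt
      (Qp n s i).continuousOn ((hRroot ρ hρ).trans (hRroot ρ' hρ').symm)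
    rw [Polynomial.deriv] at hc0
    obtain ⟨k, hk, hkc⟩ := (hzero c).1 hc0
    simp only [hκ]
    apply Finset.card_lt_card
    constructor
    · intro l hl
      rw [Finset.mem_filter] at hl ⊢
      exact ⟨hl.1, lt_trans hl.2 hlt⟩
    · intro hsub
      have hkmem : k ∈ (Finset.Icc 1 (n-1)).filter (fun l => ω l < ρ') := by
        rw [Finset.mem_filter]
        exact ⟨hk, by rw [← hkc]; exact hc.2⟩
      have := hsub hkmem
      rw [Finset.mem_filter] at this
      rw [← hkc] at this
      exact absurd this.2 (not_lt.2 (le_of_lt hc.1))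
  have hκinj : Set.InjOn κ R := by
    intro a ha b hb hab
    by_contra hne
    rcases lt_or_gt_of_ne hne with h | h
    · exact absurd hab (ne_of_lt (hκlt a b ha hb h))
    · exact absurd hab.symm (ne_of_lt (hκlt b a hb ha h))
  have hκbd : ∀ ρ, κ ρ ≤ n - 1 := by
    intro ρ
    calc κ ρ ≤ (Finset.Icc 1 (n-1)).card := Finset.card_le_card (Finset.filter_subset _ _)
    _ = n - 1 := by rw [Nat.card_Icc]; omega
  have himg : R.image κ = Finset.range n := by
    apply Finset.eq_of_subset_of_card_le
    · intro m hm
      rw [Finset.mem_image] at hm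
      obtain ⟨ρ, hρ, rfl⟩ := hm
      rw [Finset.mem_range]
      have := hκbd ρ
      omega
    · rw [Finset.card_range, Finset.card_image_of_injOn hκinj, hRcard]
  intro k hk
  rw [Finset.mem_Icc] at hk
  have hiff : ∀ ρ ∈ R, (ω k < ρ ↔ k ≤ κ ρ) := by
    intro ρ hρ
    have := dc_mem_iff (n-1) ((Finset.Icc 1 (n-1)).filter (fun l => ω l < ρ))
      (Finset.filter_subset _ _)
      (by
        intro l hl m hm1 hml
        rw [Finset.mem_filter] at hl ⊢
        rw [Finset.mem_Icc] at hl ⊢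
        have hlN := hl.1
        refine ⟨⟨hm1, by omega⟩, ?_⟩
        rcases Nat.eq_or_lt_of_le hml with h | h
        · rw [h]; exact hl.2
        · exact lt_trans (hωm m l hm1 h (by omega)) hl.2)
      k hk.1 hk.2
    rw [← this, Finset.mem_filter, Finset.mem_Icc]
    constructor
    · intro h; exact ⟨⟨hk.1, hk.2⟩, h⟩
    · intro h; exact h.2
  have hkIcc : k ∈ Finset.Icc 1 (n-1) := Finset.mem_Icc.2 hk
  have hne : ∀ j ∈ E, ω k ≠ s j := by
    intro j hj h
    have hmem : s j ∈ R := by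
      rw [hR]
      exact Finset.mem_insert_of_mem (Finset.mem_image_of_mem s hj)
    exact hRnotω (s j) hmem k hkIcc h.symm
  have hωpos : 0 < ω k := by
    have h0 : (0:ℕ) ∈ R.image κ := by rw [himg, Finset.mem_range]; omega
    rw [Finset.mem_image] at h0
    obtain ⟨ρ, hρ, hρ0⟩ := h0
    have h1 : ¬ (ω k < ρ) := by
      rw [hiff ρ hρ, hρ0]
      omega
    have h2 : ρ ≠ ω k := hRnotω ρ hρ k hkIcc
    have : ρ < ω k := lt_of_le_of_ne (not_lt.1 h1) h2
    exact lt_of_le_of_lt (hRnonneg ρ hρ) this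
  refine ⟨hωpos, hne, ?_⟩
  have himage_filter : (R.filter (fun ρ => k ≤ κ ρ)).image κ =
      (Finset.range n).filter (fun m => k ≤ m) := by
    rw [← himg, Finset.filter_image]
  have hcard1 : (R.filter (fun ρ => k ≤ κ ρ)).card = n - k := by
    rw [← Finset.card_image_of_injOn (hκinj.mono (by
      intro x hx
      exact Finset.mem_coe.2 (Finset.mem_of_mem_filter x (Finset.mem_coe.1 hx))))]
    rw [himage_filter]
    have : (Finset.range n).filter (fun m => k ≤ m) = Finset.Ico k n := by
      ext m
      rw [Finset.mem_filter, Finset.mem_range, Finset.mem_Ico]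
      omega
    rw [this, Nat.card_Ico]
  have hfc : R.filter (fun ρ => k ≤ κ ρ) = R.filter (fun ρ => ω k < ρ) := by
    apply Finset.filter_congr
    intro ρ hρ
    simp only [(hiff ρ hρ)]
  have hfins : R.filter (fun ρ => ω k < ρ) =
      (E.filter (fun j => ω k < s j)).image s := by
    rw [hR, Finset.filter_insert, if_neg (by intro h; exact absurd (lt_trans hωpos h) (lt_irrefl 0)), Finset.filter_image]
  have hlast : ((E.filter (fun j => ω k < s j)).image s).card =
      (E.filter (fun j => ω k < s j)).card := by
    apply Finset.card_image_of_injOn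
    apply hsinj.mono
    intro x hx
    exact Finset.mem_coe.2 (Finset.mem_of_mem_filter x (Finset.mem_coe.1 hx))
  rw [← hlast, ← hfins, ← hfc, hcard1]
end base
section cross
variable {n : ℕ} {s : ℕ → ℝ}

/-- Membership/count characterization for a strictly increasing finite sequence. -/
lemma count_mem_iff (N : ℕ) (v : ℕ → ℝ)
    (hv : ∀ k l, 1 ≤ k → k < l → l ≤ N → v k < v l) (x : ℝ) :
    ∀ k, 1 ≤ k → k ≤ N →
      (v k < x ↔ k ≤ ((Finset.Icc 1 N).filter (fun l => v l < x)).card) := by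
  intro k hk1 hkN
  have := dc_mem_iff N ((Finset.Icc 1 N).filter (fun l => v l < x))
    (Finset.filter_subset _ _)
    (by
      intro l hl m hm1 hml
      rw [Finset.mem_filter, Finset.mem_Icc] at hl ⊢
      refine ⟨⟨hm1, by omega⟩, ?_⟩
      rcases Nat.eq_or_lt_of_le hml with h | h
      · rw [h]; exact hl.2
      · exact lt_trans (hv m l hm1 h (by omega)) hl.2)
    k hk1 hkN
  rw [← this, Finset.mem_filter, Finset.mem_Icc]
  constructor
  · intro h; exact ⟨⟨hk1, hkN⟩, h⟩
  · intro h; exact h.2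

variable (hn : 2 ≤ n)
  (hpos : ∀ i ∈ Finset.Icc 1 n, 0 < s i)
  (hmono : ∀ i j, 1 ≤ i → i < j → j ≤ n → s i < s j)
  (ω : ℕ → ℕ → ℝ)
  (hωmono : ∀ i ∈ Finset.Icc 1 n, ∀ k l, 1 ≤ k → k < l → l ≤ n - 1 → ω i k < ω i l)
  (hωroot : ∀ i ∈ Finset.Icc 1 n, ∀ x : ℝ,
      deriv (Lbar n s i) x = 0 ↔ ∃ k ∈ Finset.Icc 1 (n - 1), x = ω i k)

include hn hpos hmono hωmono hωroot

lemma Qzero_iff {i : ℕ} (hi : i ∈ Finset.Icc 1 n) (x : ℝ) :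
    (Qp n s i).derivative.eval x = 0 ↔ ∃ k ∈ Finset.Icc 1 (n-1), x = ω i k := by
  rw [← hωroot i hi x, deriv_Lbar, _root_.div_eq_zero_iff]
  have := cst_ne hpos hmono hi
  tauto

lemma Qderiv_eval {i : ℕ} (hi : i ∈ Finset.Icc 1 n) (x : ℝ) :
    (Qp n s i).derivative.eval x = (n:ℝ) * ∏ k ∈ Finset.Icc 1 (n-1), (x - ω i k) := by
  have hfac := Qp_derivative_factor (s := s) hn hi (ω i)
    (fun k hk => (Qzero_iff hn hpos hmono ω hωmono hωroot hi (ω i k)).2 ⟨k, hk, rfl⟩)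
    (by
      intro k hk l hl hkl
      rw [Finset.mem_Icc] at hk hl
      rcases Nat.lt_or_ge k l with h | h
      · exact ne_of_lt (hωmono i hi k l hk.1 h hl.2)
      · exact (ne_of_lt (hωmono i hi l k hl.1 (by omega) hk.2)).symm)
  rw [hfac]
  simp [eval_prod]

lemma cross_lemma {i i' : ℕ} (hi : i ∈ Finset.Icc 1 n) (hi' : i' ∈ Finset.Icc 1 n)
    (hii' : i < i') :
    ∀ k ∈ Finset.Icc 1 (n-1),
      ω i' k < ω i k ∧ (k + 1 ≤ n - 1 → ω i k < ω i' (k+1)) := by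
  classical
  have hbase := base_interlace hn hpos hmono hi (ω i)
    (Qzero_iff hn hpos hmono ω hωmono hωroot hi) (hωmono i hi)
  -- the polynomial identity
  have hQQ : Qp n s i * (X - C (s i)) = Qp n s i' * (X - C (s i')) := by
    have h1 : Qp n s i * (X - C (s i)) = X * ∏ j ∈ Finset.Icc 1 n, (X - C (s j)) := by
      unfold Qp
      rw [mul_assoc, Finset.prod_erase_mul _ _ hi]
    have h2 : Qp n s i' * (X - C (s i')) = X * ∏ j ∈ Finset.Icc 1 n, (X - C (s j)) := by
      unfold Qp
      rw [mul_assoc, Finset.prod_erase_mul _ _ hi']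
    rw [h1, h2]
  have hD : derivative (Qp n s i) * (X - C (s i)) + Qp n s i
      = derivative (Qp n s i') * (X - C (s i')) + Qp n s i' := by
    have := congrArg derivative hQQ
    simp only [derivative_mul, derivative_sub, derivative_X, derivative_C,
      sub_zero, mul_one] at this
    exact this
  -- parity of the below-count
  set bb : ℕ → ℕ := fun k =>
    ((Finset.Icc 1 (n-1)).filter (fun l => ω i' l < ω i k)).card with hbb
  have hbbpar : ∀ k, 1 ≤ k → k ≤ n-1 → bb k % 2 = k % 2 ∧
      (∀ l ∈ Finset.Icc 1 (n-1), ω i k ≠ ω i' l) := by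
    intro k hk1 hkN
    obtain ⟨hxpos, hxne, hxcard⟩ := hbase k (Finset.mem_Icc.2 ⟨hk1, hkN⟩)
    set x := ω i k with hx
    -- evaluate the identities at x
    have hA' : (Qp n s i).derivative.eval x = 0 :=
      (Qzero_iff hn hpos hmono ω hωmono hωroot hi x).2 ⟨k, Finset.mem_Icc.2 ⟨hk1, hkN⟩, rfl⟩
    have he1 : (0:ℝ) * (x - s i) + (Qp n s i).eval x
        = (Qp n s i').derivative.eval x * (x - s i') + (Qp n s i').eval x := by
      have := congrArg (Polynomial.eval x) hD
      simpa [hA'] using this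
    have he2 : (Qp n s i).eval x * (x - s i) = (Qp n s i').eval x * (x - s i') := by
      have := congrArg (Polynomial.eval x) hQQ
      simpa using this
    have hkey : (Qp n s i').derivative.eval x * (x - s i')^2
        = (Qp n s i).eval x * (s i - s i') := by
      linear_combination (-(x - s i')) * he1 + he2
    -- sign of A := eval x (Qp n s i)
    have hAfac : (Qp n s i).eval x = x * ∏ j ∈ (Finset.Icc 1 n).erase i, (x - s j) :=
      Qp_eval n s i x
    have hfne : ∀ j ∈ (Finset.Icc 1 n).erase i, x - s j ≠ 0 := by
      intro j hj
      exact sub_ne_zero.2 (hxne j hj)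
    have hprodne : (∏ j ∈ (Finset.Icc 1 n).erase i, (x - s j)) ≠ 0 :=
      Finset.prod_ne_zero_iff.2 hfne
    have hAne : (Qp n s i).eval x ≠ 0 := by
      rw [hAfac]; exact mul_ne_zero (ne_of_gt hxpos) hprodne
    have hApos_iff : 0 < (Qp n s i).eval x ↔ Even (n - k) := by
      rw [hAfac]
      have h1 : (0 < ∏ j ∈ (Finset.Icc 1 n).erase i, (x - s j)) ↔ Even (n - k) := by
        rw [prod_pos_iff_even _ _ hfne]
        have : ((Finset.Icc 1 n).erase i).filter (fun j => x - s j < 0)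
            = ((Finset.Icc 1 n).erase i).filter (fun j => x < s j) := by
          apply Finset.filter_congr
          intro j _
          simp [sub_neg]
        rw [this, hxcard]
      constructor
      · intro h
        rw [← h1]
        by_contra h2
        have h3 : (∏ j ∈ (Finset.Icc 1 n).erase i, (x - s j)) < 0 :=
          lt_of_le_of_ne (not_lt.1 h2) hprodne
        nlinarith
      · intro h
        rw [← h1] at h
        exact mul_pos hxpos h
    -- sign of B'
    have hsii' : s i - s i' < 0 := by
      rw [Finset.mem_Icc] at hi hi'
      have := hmono i i' hi.1 hii' hi'.2
      linarith
    have hxsi' : x - s i' ≠ 0 := by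
      apply hfne
      rw [Finset.mem_erase, Finset.mem_Icc]
      rw [Finset.mem_Icc] at hi'
      exact ⟨by omega, hi'⟩
    have hsq : 0 < (x - s i')^2 := by positivity
    have hB'ne : (Qp n s i').derivative.eval x ≠ 0 := by
      intro h
      rw [h, zero_mul] at hkey
      exact (mul_ne_zero hAne (ne_of_lt hsii')) hkey.symm
    have hB'neg_iff : 0 < (Qp n s i').derivative.eval x ↔ ¬ Even (n - k) := by
      constructor
      · intro h hev
        have hA := hApos_iff.2 hev
        nlinarith
      · intro hev
        have hA : (Qp n s i).eval x < 0 := by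
          rcases hAne.lt_or_gt with h | h
          · exact h
          · exact absurd (hApos_iff.1 h) hev
        nlinarith
    -- B' as a product over the ω i' l
    have hB'fac := Qderiv_eval hn hpos hmono ω hωmono hωroot hi' x
    have hgne : ∀ l ∈ Finset.Icc 1 (n-1), x - ω i' l ≠ 0 := by
      intro l hl h
      apply hB'ne
      rw [hB'fac, Finset.prod_eq_zero hl h, mul_zero]
    have hprodpos_iff : (0 < ∏ l ∈ Finset.Icc 1 (n-1), (x - ω i' l)) ↔
        Even (((Finset.Icc 1 (n-1)).filter (fun l => x < ω i' l)).card) := by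
      rw [prod_pos_iff_even _ _ hgne]
      congr! 2
      apply Finset.filter_congr
      intro l _
      simp [sub_neg]
    have hnpos : (0:ℝ) < n := by positivity
    have hB'pos_iff : (0 < (Qp n s i').derivative.eval x) ↔
        (0 < ∏ l ∈ Finset.Icc 1 (n-1), (x - ω i' l)) := by
      rw [hB'fac]
      constructor
      · intro h
        by_contra h2
        have h3 : (∏ l ∈ Finset.Icc 1 (n-1), (x - ω i' l)) < 0 :=
          lt_of_le_of_ne (not_lt.1 h2) (Finset.prod_ne_zero_iff.2 hgne)
        nlinarith
      · intro h
        exact mul_pos hnpos h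
    -- counting
    have hsplitcount : bb k +
        ((Finset.Icc 1 (n-1)).filter (fun l => x < ω i' l)).card = n - 1 := by
      rw [hbb]
      rw [← Finset.card_union_of_disjoint (by
        rw [Finset.disjoint_left]
        intro l h1 h2
        rw [Finset.mem_filter] at h1 h2
        exact absurd (lt_trans h1.2 h2.2) (lt_irrefl _))]
      have : (Finset.Icc 1 (n-1)).filter (fun l => ω i' l < x) ∪
          (Finset.Icc 1 (n-1)).filter (fun l => x < ω i' l) = Finset.Icc 1 (n-1) := by
        ext l
        simp only [Finset.mem_union, Finset.mem_filter]
        constructor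
        · rintro (h | h) <;> exact h.1
        · intro h
          rcases (hgne l h).lt_or_gt with h2 | h2
          · right; exact ⟨h, by linarith⟩
          · left; exact ⟨h, by linarith⟩
      rw [this, Nat.card_Icc]
      omega
    have hfinal : Even (n - 1 - bb k) ↔ ¬ Even (n - k) := by
      rw [show n - 1 - bb k =
        ((Finset.Icc 1 (n-1)).filter (fun l => x < ω i' l)).card from by omega]
      rw [← hprodpos_iff, ← hB'pos_iff, hB'neg_iff]
    constructor
    · have h1 : bb k ≤ n - 1 := by
        calc bb k ≤ (Finset.Icc 1 (n-1)).card := Finset.card_le_card (Finset.filter_subset _ _)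
        _ = n - 1 := by rw [Nat.card_Icc]; omega
      rw [Nat.even_iff, Nat.even_iff] at hfinal
      omega
    · intro l hl h
      apply hgne l hl
      rw [h, sub_self]
  -- monotonicity of bb and conclusion
  have hbbmono : ∀ k l, 1 ≤ k → k ≤ l → l ≤ n-1 → bb k ≤ bb l := by
    intro k l hk1 hkl hlN
    apply Finset.card_le_card
    intro m hm
    rw [Finset.mem_filter] at hm ⊢
    refine ⟨hm.1, ?_⟩
    rcases Nat.eq_or_lt_of_le hkl with h | h
    · rw [← h]; exact hm.2
    · exact lt_trans hm.2 (hωmono i hi k l hk1 h hlN)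
  have hbbbd : ∀ k, 1 ≤ k → k ≤ n-1 → bb k ≤ n-1 := by
    intro k _ _
    calc bb k ≤ (Finset.Icc 1 (n-1)).card := Finset.card_le_card (Finset.filter_subset _ _)
    _ = n - 1 := by rw [Nat.card_Icc]; omega
  have hbbeq : ∀ k, 1 ≤ k → k ≤ n-1 → bb k = k :=
    mono_parity_eq (n-1) bb hbbmono hbbbd (fun k h1 h2 => (hbbpar k h1 h2).1)
  intro k hk
  rw [Finset.mem_Icc] at hk
  have hcnt := count_mem_iff (n-1) (ω i') (hωmono i' hi') (ω i k)
  have heq := hbbeq k hk.1 hk.2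
  simp only [hbb] at heq
  constructor
  · exact (hcnt k hk.1 hk.2).2 (by omega)
  · intro hk1
    have h1 : ¬ (ω i' (k+1) < ω i k) := by
      rw [hcnt (k+1) (by omega) hk1]
      omega
    have h2 : ω i k ≠ ω i' (k+1) :=
      (hbbpar k hk.1 hk.2).2 (k+1) (Finset.mem_Icc.2 ⟨by omega, hk1⟩)
    exact lt_of_le_of_ne (not_lt.1 h1) h2

end cross

lemma prod_pos_iff_count (N : ℕ) (v : ℕ → ℝ) (x : ℝ)
    (hne : ∀ k ∈ Finset.Icc 1 N, x ≠ v k) :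
    ((0 < ∏ k ∈ Finset.Icc 1 N, (x - v k)) ↔
      Even (N - ((Finset.Icc 1 N).filter (fun k => v k < x)).card)) ∧
    (∏ k ∈ Finset.Icc 1 N, (x - v k)) ≠ 0 ∧
    ((Finset.Icc 1 N).filter (fun k => v k < x)).card ≤ N := by
  classical
  have hfne : ∀ k ∈ Finset.Icc 1 N, x - v k ≠ 0 := fun k hk => sub_ne_zero.2 (hne k hk)
  have hbd : ((Finset.Icc 1 N).filter (fun k => v k < x)).card ≤ N := by
    calc _ ≤ (Finset.Icc 1 N).card := Finset.card_le_card (Finset.filter_subset _ _)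
    _ = N := by rw [Nat.card_Icc]; omega
  have hsplit : ((Finset.Icc 1 N).filter (fun k => v k < x)).card +
      ((Finset.Icc 1 N).filter (fun k => x < v k)).card = N := by
    rw [← Finset.card_union_of_disjoint (by
      rw [Finset.disjoint_left]
      intro l h1 h2
      rw [Finset.mem_filter] at h1 h2
      exact absurd (lt_trans h1.2 h2.2) (lt_irrefl _))]
    have : (Finset.Icc 1 N).filter (fun k => v k < x) ∪
        (Finset.Icc 1 N).filter (fun k => x < v k) = Finset.Icc 1 N := by
      ext l
      simp only [Finset.mem_union, Finset.mem_filter]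
      constructor
      · rintro (h | h) <;> exact h.1
      · intro h
        rcases (hfne l h).lt_or_gt with h2 | h2
        · right; exact ⟨h, by linarith⟩
        · left; exact ⟨h, by linarith⟩
    rw [this, Nat.card_Icc]
    omega
  refine ⟨?_, Finset.prod_ne_zero_iff.2 hfne, hbd⟩
  rw [prod_pos_iff_even _ _ hfne]
  have : (Finset.Icc 1 N).filter (fun k => x - v k < 0) =
      (Finset.Icc 1 N).filter (fun k => x < v k) := by
    apply Finset.filter_congr
    intro k _
    simp [sub_neg]
  rw [this, show ((Finset.Icc 1 N).filter (fun k => x < v k)).card =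
    N - ((Finset.Icc 1 N).filter (fun k => v k < x)).card from by omega]

theorem stmt_12' (n : ℕ) (hn : 2 ≤ n) (s : ℕ → ℝ)
    (hpos : ∀ i ∈ Finset.Icc 1 n, 0 < s i)
    (hmono : ∀ i j, 1 ≤ i → i < j → j ≤ n → s i < s j)
    (ω : ℕ → ℕ → ℝ)
    (hωmono : ∀ i ∈ Finset.Icc 1 n, ∀ k l, 1 ≤ k → k < l → l ≤ n - 1 → ω i k < ω i l)
    (hωroot : ∀ i ∈ Finset.Icc 1 n, ∀ x : ℝ,
      deriv (Lbar n s i) x = 0 ↔ ∃ k ∈ Finset.Icc 1 (n - 1), x = ω i k)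
    (z : ℝ) :
    ((∀ i ∈ Finset.Icc 1 n, 0 < (-1 : ℝ) ^ (n - i) * deriv (Lbar n s i) z) ∨
     (∀ i ∈ Finset.Icc 1 n, (-1 : ℝ) ^ (n - i) * deriv (Lbar n s i) z < 0)) ↔
    (∃ j ∈ Finset.Icc 1 n, (1 < j → ω 1 (j - 1) < z) ∧ (j < n → z < ω n j)) := by
  classical
  have h1n : (1:ℕ) ∈ Finset.Icc 1 n := Finset.mem_Icc.2 ⟨le_rfl, by omega⟩
  have hnn : n ∈ Finset.Icc 1 n := Finset.mem_Icc.2 ⟨by omega, le_rfl⟩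
  -- sign reduction to products
  have hsign : ∀ i ∈ Finset.Icc 1 n,
      ((0 < (-1:ℝ)^(n-i) * deriv (Lbar n s i) z ↔
        0 < ∏ k ∈ Finset.Icc 1 (n-1), (z - ω i k)) ∧
      ((-1:ℝ)^(n-i) * deriv (Lbar n s i) z < 0 ↔
        (∏ k ∈ Finset.Icc 1 (n-1), (z - ω i k)) < 0)) := by
    intro i hi
    have hd := deriv_Lbar n s i z
    have he := Qderiv_eval hn hpos hmono ω hωmono hωroot hi z
    have hc := cst_sign hpos hmono hi
    have hcne := cst_ne hpos hmono hi
    have hdpos : 0 < (n:ℝ) * ((-1:ℝ)^(n-i) / cst n s i) := by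
      have h2 : (-1:ℝ)^(n-i) / cst n s i =
          ((-1:ℝ)^(n-i) * cst n s i) / (cst n s i)^2 := by
        field_simp
      have h3 : 0 < (-1:ℝ)^(n-i) / cst n s i := by
        rw [h2]
        apply div_pos hc
        positivity
      have h4 : (0:ℝ) < n := by positivity
      exact mul_pos h4 h3
    have hg : (-1:ℝ)^(n-i) * deriv (Lbar n s i) z
        = ((n:ℝ) * ((-1:ℝ)^(n-i) / cst n s i)) * ∏ k ∈ Finset.Icc 1 (n-1), (z - ω i k) := by
      rw [hd, he]
      ring
    rw [hg]
    constructor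
    · constructor
      · intro h
        by_contra h2
        nlinarith [mul_nonpos_of_nonneg_of_nonpos (le_of_lt hdpos) (not_lt.1 h2)]
      · intro h
        exact mul_pos hdpos h
    · constructor
      · intro h
        by_contra h2
        nlinarith [mul_nonneg (le_of_lt hdpos) (not_lt.1 h2)]
      · intro h
        exact mul_neg_of_pos_of_neg hdpos h
  rw [or_congr
    (forall₂_congr (fun i hi => (hsign i hi).1))
    (forall₂_congr (fun i hi => (hsign i hi).2))]
  constructor
  · -- same sign implies z in some interval
    intro hall
    have hne : ∀ i ∈ Finset.Icc 1 n, ∀ k ∈ Finset.Icc 1 (n-1), z ≠ ω i k := by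
      intro i hi k hk h
      have hzero : (∏ k ∈ Finset.Icc 1 (n-1), (z - ω i k)) = 0 := by
        rw [Finset.prod_eq_zero hk (by rw [h, sub_self])]
      rcases hall with h2 | h2
      · have := h2 i hi
        rw [hzero] at this
        exact lt_irrefl 0 this
      · have := h2 i hi
        rw [hzero] at this
        exact lt_irrefl 0 this
    set m : ℕ → ℕ := fun i => ((Finset.Icc 1 (n-1)).filter (fun k => ω i k < z)).card with hm
    have hcount : ∀ i ∈ Finset.Icc 1 n, _ := fun i hi =>
      prod_pos_iff_count (n-1) (ω i) z (hne i hi)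
    have hpar : (Even (n - 1 - m 1) ↔ Even (n - 1 - m n)) := by
      obtain ⟨hiff1, hne1, _⟩ := hcount 1 h1n
      obtain ⟨hiffn, hnen, _⟩ := hcount n hnn
      rcases hall with h2 | h2
      · rw [← hiff1, ← hiffn]
        exact ⟨fun _ => h2 n hnn, fun _ => h2 1 h1n⟩
      · constructor
        · intro h
          exact absurd (hiff1.2 h) (not_lt.2 (le_of_lt (h2 1 h1n)))
        · intro h
          exact absurd (hiffn.2 h) (not_lt.2 (le_of_lt (h2 n hnn)))
    have hm1bd : m 1 ≤ n - 1 := (hcount 1 h1n).2.2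
    have hmnbd : m n ≤ n - 1 := (hcount n hnn).2.2
    have hcnt1 : ∀ k, 1 ≤ k → k ≤ n-1 → (ω 1 k < z ↔ k ≤ m 1) :=
      fun k h1 h2 => count_mem_iff (n-1) (ω 1) (hωmono 1 h1n) z k h1 h2
    have hcntn : ∀ k, 1 ≤ k → k ≤ n-1 → (ω n k < z ↔ k ≤ m n) :=
      fun k h1 h2 => count_mem_iff (n-1) (ω n) (hωmono n hnn) z k h1 h2
    have hcross := cross_lemma hn hpos hmono ω hωmono hωroot h1n hnn (by omega)
    -- m 1 ≤ m n
    have hmle : m 1 ≤ m n := by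
      apply Finset.card_le_card
      intro k hk
      rw [Finset.mem_filter] at hk ⊢
      refine ⟨hk.1, ?_⟩
      exact lt_trans (hcross k hk.1).1 hk.2
    -- m n ≤ m 1 + 1
    have hmnle : m n ≤ m 1 + 1 := by
      by_contra h
      push_neg at h
      have h2 : m 1 + 2 ≤ n - 1 := by omega
      have h3 : ω n (m 1 + 2) < z := (hcntn (m 1 + 2) (by omega) (by omega)).2 (by omega)
      have h4 : ¬ (ω 1 (m 1 + 1) < z) := by
        rw [hcnt1 (m 1 + 1) (by omega) (by omega)]
        omega
      have h5 : z < ω 1 (m 1 + 1) :=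
        lt_of_le_of_ne (not_lt.1 h4) (hne 1 h1n (m 1 + 1) (Finset.mem_Icc.2 ⟨by omega, by omega⟩))
      have h6 : ω 1 (m 1 + 1) < ω n (m 1 + 2) :=
        (hcross (m 1 + 1) (Finset.mem_Icc.2 ⟨by omega, by omega⟩)).2 (by omega)
      linarith
    have hmeq : m n = m 1 := by
      rw [Nat.even_iff, Nat.even_iff] at hpar
      omega
    refine ⟨m 1 + 1, Finset.mem_Icc.2 ⟨by omega, by omega⟩, ?_, ?_⟩
    · intro h
      have hm1pos : 1 ≤ m 1 := by omega
      have : ω 1 (m 1 + 1 - 1) < z ↔ m 1 + 1 - 1 ≤ m 1 := by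
        rw [show m 1 + 1 - 1 = m 1 from by omega]
        exact hcnt1 (m 1) hm1pos (by omega)
      rw [this]
      omega
    · intro h
      have h4 : ¬ (ω n (m 1 + 1) < z) := by
        rw [hcntn (m 1 + 1) (by omega) (by omega)]
        omega
      exact lt_of_le_of_ne (not_lt.1 h4)
        (hne n hnn (m 1 + 1) (Finset.mem_Icc.2 ⟨by omega, by omega⟩))
  · -- z in some interval implies same sign
    rintro ⟨j, hj, hj1, hj2⟩
    rw [Finset.mem_Icc] at hj
    -- for every i, the factors split at j
    have hfact : ∀ i ∈ Finset.Icc 1 n, ∀ k ∈ Finset.Icc 1 (n-1),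
        (k ≤ j - 1 → ω i k < z) ∧ (j ≤ k → z < ω i k) := by
      intro i hi k hk
      rw [Finset.mem_Icc] at hk
      constructor
      · intro hkj
        have hj1' : 1 < j := by omega
        have hjm : j - 1 ∈ Finset.Icc 1 (n-1) := Finset.mem_Icc.2 ⟨by omega, by omega⟩
        have h1 : ω i k ≤ ω i (j-1) := by
          rcases Nat.eq_or_lt_of_le hkj with h | h
          · rw [h]
          · exact le_of_lt (hωmono i hi k (j-1) hk.1 h (by omega))
        have h2 : ω i (j-1) ≤ ω 1 (j-1) := by
          rcases Nat.eq_or_lt_of_le (show 1 ≤ i from (Finset.mem_Icc.1 hi).1) with h | h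
          · rw [← h]
          · exact le_of_lt ((cross_lemma hn hpos hmono ω hωmono hωroot h1n hi h
              (j-1) hjm).1)
        have := hj1 hj1'
        linarith
      · intro hjk
        have hjn : j < n := by omega
        have hjm : j ∈ Finset.Icc 1 (n-1) := Finset.mem_Icc.2 ⟨by omega, by omega⟩
        have h1 : ω n j < ω i j ∨ i = n := by
          rcases Nat.eq_or_lt_of_le (show i ≤ n from (Finset.mem_Icc.1 hi).2) with h | h
          · right; exact h
          · left; exact (cross_lemma hn hpos hmono ω hωmono hωroot hi hnn h j hjm).1
        have h2 : ω n j ≤ ω i j := by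
          rcases h1 with h | h
          · exact le_of_lt h
          · rw [h]
        have h3 : ω i j ≤ ω i k := by
          rcases Nat.eq_or_lt_of_le hjk with h | h
          · rw [h]
          · exact le_of_lt (hωmono i hi j k (by omega) h hk.2)
        have := hj2 hjn
        linarith
    have hne : ∀ i ∈ Finset.Icc 1 n, ∀ k ∈ Finset.Icc 1 (n-1), z ≠ ω i k := by
      intro i hi k hk
      have := hfact i hi k hk
      rw [Finset.mem_Icc] at hk
      rcases Nat.lt_or_ge k j with h | h
      · exact ne_of_gt (this.1 (by omega))
      · exact ne_of_lt (this.2 h)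
    have hmval : ∀ i ∈ Finset.Icc 1 n,
        ((Finset.Icc 1 (n-1)).filter (fun k => ω i k < z)).card = j - 1 := by
      intro i hi
      have : (Finset.Icc 1 (n-1)).filter (fun k => ω i k < z) = Finset.Icc 1 (j-1) := by
        ext k
        rw [Finset.mem_filter, Finset.mem_Icc, Finset.mem_Icc]
        constructor
        · rintro ⟨⟨h1, h2⟩, h3⟩
          refine ⟨h1, ?_⟩
          by_contra h4
          have := (hfact i hi k (Finset.mem_Icc.2 ⟨h1, h2⟩)).2 (by omega)
          linarith
        · rintro ⟨h1, h2⟩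
          have hk : k ∈ Finset.Icc 1 (n-1) := Finset.mem_Icc.2 ⟨h1, by omega⟩
          exact ⟨Finset.mem_Icc.1 hk, (hfact i hi k hk).1 h2⟩
      rw [this, Nat.card_Icc]
      omega
    by_cases hev : Even (n - 1 - (j - 1))
    · left
      intro i hi
      obtain ⟨hiff, hne', _⟩ := prod_pos_iff_count (n-1) (ω i) z (hne i hi)
      rw [hiff, hmval i hi]
      exact hev
    · right
      intro i hi
      obtain ⟨hiff, hne', _⟩ := prod_pos_iff_count (n-1) (ω i) z (hne i hi)
      have : ¬ (0 < ∏ k ∈ Finset.Icc 1 (n-1), (z - ω i k)) := by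
        rw [hiff, hmval i hi]
        exact hev
      exact lt_of_le_of_ne (not_lt.1 this) hne'

/-- For `n ≥ 2`, nodes `0 < s_1 < ⋯ < s_n`, roots `ω_{i,1} < ⋯ < ω_{i,n−1}` of `L̄_i′`,
and intervals `A_j = (ω_{1,j−1}, ω_{n,j})` (with `ω_{1,0} = −∞`, `ω_{n,n} = +∞`):
the `n` numbers `(−1)^{n−i} L̄_i′(z)`, `i = 1, …, n`, are all nonzero and of the same
sign if and only if `z ∈ ⋃_{j=1}^n A_j`. -/
theorem stmt_12 (n : ℕ) (hn : 2 ≤ n) (s : ℕ → ℝ)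
    (hpos : ∀ i ∈ Finset.Icc 1 n, 0 < s i)
    (hmono : ∀ i j, 1 ≤ i → i < j → j ≤ n → s i < s j)
    (ω : ℕ → ℕ → ℝ)
    (hωmono : ∀ i ∈ Finset.Icc 1 n, ∀ k l, 1 ≤ k → k < l → l ≤ n - 1 → ω i k < ω i l)
    (hωroot : ∀ i ∈ Finset.Icc 1 n, ∀ x : ℝ,
      deriv (Lbar n s i) x = 0 ↔ ∃ k ∈ Finset.Icc 1 (n - 1), x = ω i k)
    (z : ℝ) :
    ((∀ i ∈ Finset.Icc 1 n, 0 < (-1 : ℝ) ^ (n - i) * deriv (Lbar n s i) z) ∨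
     (∀ i ∈ Finset.Icc 1 n, (-1 : ℝ) ^ (n - i) * deriv (Lbar n s i) z < 0)) ↔
    (∃ j ∈ Finset.Icc 1 n, (1 < j → ω 1 (j - 1) < z) ∧ (j < n → z < ω n j)) :=
  stmt_12' n hn s hpos hmono ω hωmono hωroot z
end

section
/- Let n ≥ 1, a > 0, c ∈ ℝⁿ, and let ξ* be a design with support points x_1,…,x_m ∈ [0,a] and weights ω_1,…,ω_m. Suppose there exist p ∈ ℝⁿ and h ∈ ℝ with |pᵀf(x)| ≤ 1 for all x ∈ [0,a], |pᵀf(x_i)| = 1 for i = 1,…,m, and c = h·Σ_{i=1}^m ω_i·(pᵀf(x_i))·f(x_i). Then for every design η on [0,a] and every v ∈ ℝⁿ with M(η)v = c, one has cᵀv ≥ h²; moreover there exists v* ∈ ℝⁿ with M(ξ*)v* = c and cᵀv* = h². In particular ξ* is c-optimal with optimal value h². -/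
open Finset Matrix

/-- The regression vector `f(x) = (x, x², …, xⁿ)ᵀ` of the degree-`n` polynomial model
without intercept. -/
def modelVec (n : ℕ) (x : ℝ) : Fin n → ℝ := fun i => x ^ (i.1 + 1)

/-- An approximate design on `[0, a]`: a probability measure with finite support
`x_1, …, x_m ⊆ [0, a]` and weights `ω_1, …, ω_m`. -/
structure Design (n : ℕ) (a : ℝ) where
  m : ℕ
  pts : Fin m → ℝ
  wts : Fin m → ℝ
  pts_mem : ∀ i, pts i ∈ Set.Icc (0 : ℝ) a
  wts_nonneg : ∀ i, 0 ≤ wts i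
  wts_sum : ∑ i, wts i = 1

/-- The information matrix `M(ξ) = Σᵢ ωᵢ f(xᵢ) f(xᵢ)ᵀ` of a design. -/
noncomputable def infoMatrix {n : ℕ} {a : ℝ} (ξ : Design n a) :
    Matrix (Fin n) (Fin n) ℝ :=
  ∑ i, ξ.wts i • Matrix.vecMulVec (modelVec n (ξ.pts i)) (modelVec n (ξ.pts i))

lemma dot_sum' {n m : ℕ} (w : Fin n → ℝ) (f : Fin m → Fin n → ℝ) :
    w ⬝ᵥ ∑ i, f i = ∑ i, w ⬝ᵥ f i := by
  simp only [dotProduct, Finset.sum_apply, Finset.mul_sum]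
  rw [Finset.sum_comm]

lemma info_mulVec {n : ℕ} {a : ℝ} (ξ : Design n a) (v : Fin n → ℝ) :
    (infoMatrix ξ).mulVec v
      = ∑ i, (ξ.wts i * (modelVec n (ξ.pts i) ⬝ᵥ v)) • modelVec n (ξ.pts i) := by
  unfold infoMatrix
  ext j
  simp only [Finset.sum_apply, Pi.smul_apply, smul_eq_mul, Matrix.mulVec,
    dotProduct, Matrix.sum_apply, Matrix.smul_apply, Matrix.vecMulVec_apply,
    Finset.sum_mul, Finset.mul_sum]
  rw [Finset.sum_comm]
  congr 1; ext i; congr 1; ext k; ring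

/-- **Sufficiency part of the Elfving criterion with explicit bound.** If `p` and `h`
satisfy the three Elfving conditions for `ξ*`, then every design `η` with `M(η)v = c`
satisfies `cᵀv ≥ h²`, and `ξ*` attains this value; in particular `ξ*` is `c`-optimal
with optimal value `h²`. -/
theorem stmt_14 (n : ℕ) (hn : 1 ≤ n) (a : ℝ) (ha : 0 < a) (c : Fin n → ℝ)
    (ξ : Design n a) (p : Fin n → ℝ) (h : ℝ)
    (h1 : ∀ x ∈ Set.Icc (0 : ℝ) a, |p ⬝ᵥ modelVec n x| ≤ 1)
    (h2 : ∀ i, |p ⬝ᵥ modelVec n (ξ.pts i)| = 1)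
    (h3 : c = h • ∑ i, (ξ.wts i * (p ⬝ᵥ modelVec n (ξ.pts i))) • modelVec n (ξ.pts i)) :
    (∀ (η : Design n a) (v : Fin n → ℝ),
      (infoMatrix η).mulVec v = c → h ^ 2 ≤ c ⬝ᵥ v) ∧
    (∃ v : Fin n → ℝ, (infoMatrix ξ).mulVec v = c ∧ c ⬝ᵥ v = h ^ 2) := by
  -- p ⬝ c = h
  have hpc : p ⬝ᵥ c = h := by
    rw [h3]
    rw [dotProduct_smul, dot_sum']
    have : ∀ i, p ⬝ᵥ ((ξ.wts i * (p ⬝ᵥ modelVec n (ξ.pts i))) • modelVec n (ξ.pts i))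
        = ξ.wts i * (p ⬝ᵥ modelVec n (ξ.pts i)) ^ 2 := by
      intro i; rw [dotProduct_smul]; simp only [smul_eq_mul]; ring
    simp only [this]
    have : ∀ i, (p ⬝ᵥ modelVec n (ξ.pts i)) ^ 2 = 1 := by
      intro i; rw [← sq_abs, h2 i, one_pow]
    simp only [this, mul_one, ξ.wts_sum, smul_eq_mul, mul_one]
  constructor
  · intro η v hv
    -- c ⬝ v = Σ w (f⬝v)^2
    have hcv : c ⬝ᵥ v = ∑ i, η.wts i * (modelVec n (η.pts i) ⬝ᵥ v) ^ 2 := by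
      rw [← hv, info_mulVec, dotProduct_comm, dot_sum']
      congr 1; ext i; rw [dotProduct_smul, dotProduct_comm]; simp only [smul_eq_mul]; ring
    have hh : h = ∑ i, η.wts i * ((p ⬝ᵥ modelVec n (η.pts i)) * (modelVec n (η.pts i) ⬝ᵥ v)) := by
      rw [← hpc, ← hv, info_mulVec, dot_sum']
      congr 1; ext i; rw [dotProduct_smul]; simp only [smul_eq_mul]; ring
    set F := fun i => Real.sqrt (η.wts i) * (p ⬝ᵥ modelVec n (η.pts i))
    set G := fun i => Real.sqrt (η.wts i) * (modelVec n (η.pts i) ⬝ᵥ v)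
    have key : h = ∑ i, F i * G i := by
      rw [hh]; congr 1; ext i
      have hs : Real.sqrt (η.wts i) * Real.sqrt (η.wts i) = η.wts i :=
        Real.mul_self_sqrt (η.wts_nonneg i)
      have hFG : F i * G i = (Real.sqrt (η.wts i) * Real.sqrt (η.wts i)) *
          ((p ⬝ᵥ modelVec n (η.pts i)) * (modelVec n (η.pts i) ⬝ᵥ v)) := by
        simp only [F, G]; ring
      rw [hFG, hs]
    have cs := Finset.sum_mul_sq_le_sq_mul_sq Finset.univ F G
    have hF : ∑ i, F i ^ 2 ≤ 1 := by
      calc ∑ i, F i ^ 2 ≤ ∑ i, η.wts i := by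
            apply Finset.sum_le_sum
            intro i _
            have h1' : (p ⬝ᵥ modelVec n (η.pts i)) ^ 2 ≤ 1 := by
              rw [← sq_abs]
              exact pow_le_one₀ (abs_nonneg _) (h1 _ (η.pts_mem i))
            have : F i ^ 2 = η.wts i * (p ⬝ᵥ modelVec n (η.pts i)) ^ 2 := by
              simp only [F, mul_pow, Real.sq_sqrt (η.wts_nonneg i)]
            rw [this]
            nlinarith [η.wts_nonneg i]
        _ = 1 := η.wts_sum
    have hG : ∑ i, G i ^ 2 = c ⬝ᵥ v := by
      rw [hcv]; congr 1; ext i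
      simp only [G, mul_pow, Real.sq_sqrt (η.wts_nonneg i)]
    have hGnn : 0 ≤ ∑ i, G i ^ 2 := Finset.sum_nonneg fun i _ => sq_nonneg _
    calc h ^ 2 = (∑ i, F i * G i) ^ 2 := by rw [key]
      _ ≤ (∑ i, F i ^ 2) * ∑ i, G i ^ 2 := cs
      _ ≤ 1 * ∑ i, G i ^ 2 := mul_le_mul_of_nonneg_right hF hGnn
      _ = c ⬝ᵥ v := by rw [one_mul, hG]
  · refine ⟨h • p, ?_, ?_⟩
    · rw [info_mulVec, h3, Finset.smul_sum]
      congr 1; ext i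
      rw [dotProduct_smul, smul_smul,
        dotProduct_comm (modelVec n (ξ.pts i)) p]
      congr 1; simp only [smul_eq_mul]; ring
    · rw [dotProduct_smul, dotProduct_comm, hpc, smul_eq_mul, sq]
end
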